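/- arXiv:2505.07268 — 2 statements merged into one kernel-verified Lean document; each statement's English description precedes it below -/
import Mathlib

section
/- Let G be a graph and U, U' ⊆ V(G) be vertex subsets with m(U) = m(U') that are adjacent under the component sliding rule CS (i.e., |C(U) \ C(U')| = |C(U') \ C(U)| = 1 and, writing C and C' for the unique components in C(U) \ C(U') and C(U') \ C(U) respectively, C ∪ C' induces a connected subgraph of G). Then there exists a sequence ⟨W_0 = U, W_1, …, W_ℓ = U'⟩ of vertex subsets of G such that every W_i has CC-multiset m(W_i) = m(U) and every two consecutive subsets W_i, W_{i+1} are adjacent under the rule CS1 (i.e., adjacent under CS and additionally the unique differing components C_i ∈ C(W_i) \ C(W_{i+1}) and C_{i+1} ∈ C(W_{i+1}) \ C(W_i) satisfy |C_i \ C_{i+1}| = |C_{i+1} \ C_i| = 1). In particular, reconfigurability under CS is equivalent to reconfigurability under CS1. -/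
set_option linter.unusedSectionVars false
set_option linter.unnecessarySimpa false
open scoped Classical

noncomputable section

/-- `U` induces a connected subgraph of `G`. -/
def IsConnSub {V : Type*} (G : SimpleGraph V) (U : Finset V) : Prop :=
  (G.induce (U : Set V)).Connected

/-- The set of connected components of a vertex subset `U`:
maximal subsets of `U` inducing connected subgraphs. -/
def comps {V : Type*} [Fintype V] [DecidableEq V] (G : SimpleGraph V) (U : Finset V) :
    Finset (Finset V) :=
  Finset.univ.filter (fun C => C ⊆ U ∧ IsConnSub G C ∧
    ∀ D : Finset V, C ⊆ D → D ⊆ U → IsConnSub G D → D = C)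

/-- The CC-multiset of `U`: the multiset of sizes of connected components of `U`. -/
def ccMultiset {V : Type*} [Fintype V] [DecidableEq V] (G : SimpleGraph V) (U : Finset V) :
    Multiset ℕ :=
  (comps G U).val.map Finset.card

/-- Adjacency under component jumping (CJ). -/
def adjCJ {V : Type*} [Fintype V] [DecidableEq V] (G : SimpleGraph V) (U U' : Finset V) : Prop :=
  ccMultiset G U = ccMultiset G U' ∧
  (comps G U \ comps G U').card = 1 ∧ (comps G U' \ comps G U).card = 1

/-- Adjacency under component sliding (CS). -/
def adjCS {V : Type*} [Fintype V] [DecidableEq V] (G : SimpleGraph V) (U U' : Finset V) : Prop :=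
  adjCJ G U U' ∧
  ∀ C ∈ comps G U \ comps G U', ∀ C' ∈ comps G U' \ comps G U, IsConnSub G (C ∪ C')

/-- Adjacency under CS1 (component sliding by one vertex). -/
def adjCS1 {V : Type*} [Fintype V] [DecidableEq V] (G : SimpleGraph V) (U U' : Finset V) : Prop :=
  adjCS G U U' ∧
  ∀ C ∈ comps G U \ comps G U', ∀ C' ∈ comps G U' \ comps G U,
    (C \ C').card = 1 ∧ (C' \ C).card = 1

/-- Adjacency under token jumping (TJ). -/
def adjTJ {V : Type*} [DecidableEq V] (G : SimpleGraph V) (U U' : Finset V) : Prop :=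
  (U \ U').card = 1 ∧ (U' \ U).card = 1

/-- `A` and `B` are reconfigurable under rule `R` keeping the CC-multiset equal to `M`. -/
def Reconf {V : Type*} [Fintype V] [DecidableEq V] (G : SimpleGraph V) (M : Multiset ℕ)
    (R : Finset V → Finset V → Prop) (A B : Finset V) : Prop :=
  ∃ (ℓ : ℕ) (W : ℕ → Finset V), W 0 = A ∧ W ℓ = B ∧
    (∀ i ≤ ℓ, ccMultiset G (W i) = M) ∧ ∀ i < ℓ, R (W i) (W (i + 1))

end

namespace Slide

variable {V : Type*} [Fintype V] [DecidableEq V] (G : SimpleGraph V)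

def okWalk (X : Finset V) (a b : V) : Prop :=
  ∃ w : G.Walk a b, ∀ v ∈ w.support, v ∈ X

variable {G}

lemma okWalk_mono {X Y : Finset V} (h : X ⊆ Y) {a b : V} (hw : okWalk G X a b) :
    okWalk G Y a b := by
  obtain ⟨w, hw⟩ := hw
  exact ⟨w, fun v hv => h (hw v hv)⟩

lemma okWalk_refl {X : Finset V} {a : V} (ha : a ∈ X) : okWalk G X a a :=
  ⟨SimpleGraph.Walk.nil, by simpa using ha⟩

lemma okWalk_symm {X : Finset V} {a b : V} (h : okWalk G X a b) : okWalk G X b a := by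
  obtain ⟨w, hw⟩ := h
  exact ⟨w.reverse, by simpa using hw⟩

lemma okWalk_trans {X : Finset V} {a b c : V} (h1 : okWalk G X a b) (h2 : okWalk G X b c) :
    okWalk G X a c := by
  obtain ⟨w1, hw1⟩ := h1
  obtain ⟨w2, hw2⟩ := h2
  refine ⟨w1.append w2, fun v hv => ?_⟩
  rw [SimpleGraph.Walk.mem_support_append_iff] at hv
  rcases hv with hv | hv
  · exact hw1 v hv
  · exact hw2 v hv

lemma okWalk_left {X : Finset V} {a b : V} (h : okWalk G X a b) : a ∈ X := by
  obtain ⟨w, hw⟩ := h; exact hw a w.start_mem_support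

lemma okWalk_right {X : Finset V} {a b : V} (h : okWalk G X a b) : b ∈ X := by
  obtain ⟨w, hw⟩ := h; exact hw b w.end_mem_support

lemma okWalk_adj {X : Finset V} {a b : V} (ha : a ∈ X) (hb : b ∈ X) (hab : G.Adj a b) :
    okWalk G X a b :=
  ⟨hab.toWalk, by simp [ha, hb]⟩

private lemma okWalk_of_induceWalk {X : Finset V} :
    ∀ {a b : (X : Set V)} (_ : (G.induce (X : Set V)).Walk a b), okWalk G X a.1 b.1 := by
  intro a b w
  induction w with
  | nil => exact okWalk_refl (by simpa using a.2)
  | @cons u v c hadj p ih =>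
      refine okWalk_trans (okWalk_adj (by simpa using u.2) (by simpa using v.2) ?_) ih
      simpa using hadj

lemma cn_iff {X : Finset V} :
    IsConnSub G X ↔ X.Nonempty ∧ ∀ a ∈ X, ∀ b ∈ X, okWalk G X a b := by
  constructor
  · intro h
    obtain ⟨x⟩ := h.nonempty
    refine ⟨⟨x.1, by simpa using x.2⟩, fun a ha b hb => ?_⟩
    obtain ⟨w⟩ := h.preconnected ⟨a, by simpa using ha⟩ ⟨b, by simpa using hb⟩
    exact okWalk_of_induceWalk w
  · rintro ⟨⟨x, hx⟩, h⟩
    have hne : Nonempty (X : Set V) := ⟨⟨x, by simpa using hx⟩⟩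
    refine ⟨fun a b => ?_⟩
    have ha' : a.1 ∈ X := by simpa using a.2
    have hb' : b.1 ∈ X := by simpa using b.2
    obtain ⟨w, hw⟩ := h a.1 ha' b.1 hb'
    have key : ∀ {c d : V} (w : G.Walk c d) (_ : ∀ v ∈ w.support, v ∈ X)
        (hc : c ∈ (X : Set V)) (hd : d ∈ (X : Set V)),
        (G.induce (X : Set V)).Reachable ⟨c, hc⟩ ⟨d, hd⟩ := by
      intro c d w
      induction w with
      | nil => intro _ hc hd; rfl
      | @cons u v t hadj p ih =>
          intro hs hc hd
          have hv : v ∈ X := hs v (by simp)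
          refine SimpleGraph.Reachable.trans ?_ (ih (fun z hz => hs z (by simp [hz])) (by simpa using hv) hd)
          exact SimpleGraph.Adj.reachable (by simpa using hadj)
    have := key w hw (by simpa using ha') (by simpa using hb')
    convert this


lemma cn_nonempty {X : Finset V} (h : IsConnSub G X) : X.Nonempty :=
  (cn_iff.1 h).1

lemma cn_singleton (v : V) : IsConnSub G ({v} : Finset V) := by
  rw [cn_iff]
  refine ⟨⟨v, by simp⟩, fun a ha b hb => ?_⟩
  simp only [Finset.mem_singleton] at ha hb
  subst ha; subst hb
  exact okWalk_refl (by simp)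

/-- glue at a common vertex -/
lemma cn_union_common {X Y : Finset V} (hX : IsConnSub G X) (hY : IsConnSub G Y)
    {p : V} (hpX : p ∈ X) (hpY : p ∈ Y) : IsConnSub G (X ∪ Y) := by
  rw [cn_iff] at hX hY ⊢
  refine ⟨⟨p, by simp [hpX]⟩, fun a ha b hb => ?_⟩
  have key : ∀ c ∈ X ∪ Y, okWalk G (X ∪ Y) c p := by
    intro c hc
    rcases Finset.mem_union.1 hc with hc | hc
    · exact okWalk_mono Finset.subset_union_left (hX.2 c hc p hpX)
    · exact okWalk_mono Finset.subset_union_right (hY.2 c hc p hpY)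
  exact okWalk_trans (key a ha) (okWalk_symm (key b hb))

/-- glue along an edge -/
lemma cn_union_adj {X Y : Finset V} (hX : IsConnSub G X) (hY : IsConnSub G Y)
    {x y : V} (hx : x ∈ X) (hy : y ∈ Y) (hxy : G.Adj x y) : IsConnSub G (X ∪ Y) := by
  rw [cn_iff] at hX hY ⊢
  refine ⟨⟨x, by simp [hx]⟩, fun a ha b hb => ?_⟩
  have key : ∀ c ∈ X ∪ Y, okWalk G (X ∪ Y) c x := by
    intro c hc
    rcases Finset.mem_union.1 hc with hc | hc
    · exact okWalk_mono Finset.subset_union_left (hX.2 c hc x hx)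
    · refine okWalk_trans (okWalk_mono Finset.subset_union_right (hY.2 c hc y hy)) ?_
      exact okWalk_adj (by simp [hy]) (by simp [hx]) hxy.symm
  exact okWalk_trans (key a ha) (okWalk_symm (key b hb))

/-- add a vertex adjacent to the set -/
lemma cn_insert {X : Finset V} (hX : IsConnSub G X) {x v : V} (hx : x ∈ X)
    (hxv : G.Adj x v) : IsConnSub G (insert v X) := by
  have := cn_union_adj (X := X) (Y := {v}) hX (cn_singleton v) hx (by simp) hxv
  rwa [show X ∪ {v} = insert v X by ext a; simp [or_comm]] at this

lemma mem_sup_id {F : Finset (Finset V)} {a : V} :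
    a ∈ F.sup id ↔ ∃ P ∈ F, a ∈ P := by
  simpa using Finset.mem_sup (s := F) (f := id) (v := a)

/-- star glue: a vertex `s` together with parts each connected and attached to `s`. -/
lemma cn_star {s : V} {F : Finset (Finset V)}
    (hconn : ∀ P ∈ F, IsConnSub G P)
    (hatt : ∀ P ∈ F, ∃ t ∈ P, G.Adj t s) :
    IsConnSub G (insert s (F.sup id)) := by
  induction F using Finset.induction_on with
  | empty => simpa using cn_singleton s
  | @insert P F hPF ih =>
      have h1 : IsConnSub G (insert s P) := by
        obtain ⟨t, ht, hts⟩ := hatt P (by simp)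
        exact cn_insert (hconn P (by simp)) ht hts
      have h2 : IsConnSub G (insert s (F.sup id)) :=
        ih (fun Q hQ => hconn Q (by simp [hQ])) (fun Q hQ => hatt Q (by simp [hQ]))
      have := cn_union_common h1 h2 (p := s) (by simp) (by simp)
      rwa [show insert s P ∪ insert s (F.sup id) = insert s ((insert P F).sup id) by
        ext a; simp [Finset.sup_insert]] at this

/-- existence of an exit edge -/
lemma exit_edge {S Y : Finset V} (hS : IsConnSub G S) (hY : Y ⊆ S)
    (hne : Y.Nonempty) (hne2 : (S \ Y).Nonempty) :
    ∃ y v, y ∈ Y ∧ v ∈ S ∧ v ∉ Y ∧ G.Adj y v := by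
  obtain ⟨a, ha⟩ := hne
  obtain ⟨b, hb⟩ := hne2
  rw [Finset.mem_sdiff] at hb
  obtain ⟨w, hw⟩ := (cn_iff.1 hS).2 a (hY ha) b hb.1
  clear hS
  induction w with
  | nil => exact absurd ha hb.2
  | @cons u c d hadj p ih =>
      by_cases hc : c ∈ Y
      · exact ih hc hb (fun z hz => hw z (by simp [hz]))
      · exact ⟨u, c, ha, hw c (by simp), hc, hadj⟩

/-- walks cannot cross between two separated sets -/
private lemma sep_walk {X Y : Finset V}
    (hdisj : Disjoint X Y) (hadj : ∀ a ∈ X, ∀ b ∈ Y, ¬G.Adj a b) :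
    ∀ {a b : V} (w : G.Walk a b), (∀ v ∈ w.support, v ∈ X ∪ Y) → a ∈ X → b ∈ X := by
  intro a b w
  induction w with
  | nil => exact fun _ h => h
  | @cons u c d h p ih =>
      intro hs hu
      have hc : c ∈ X ∪ Y := hs c (by simp)
      rcases Finset.mem_union.1 hc with hc | hc
      · exact ih (fun z hz => hs z (by simp [hz])) hc
      · exact absurd h (hadj u hu c hc)

lemma cn_subset_of_separated {D X Y : Finset V} (hD : IsConnSub G D)
    (hsub : D ⊆ X ∪ Y) (hdisj : Disjoint X Y) (hadj : ∀ a ∈ X, ∀ b ∈ Y, ¬G.Adj a b)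
    {a : V} (ha : a ∈ D) (haX : a ∈ X) : D ⊆ X := by
  intro b hb
  obtain ⟨w, hw⟩ := (cn_iff.1 hD).2 a ha b hb
  exact sep_walk hdisj hadj w (fun v hv => hsub (hw v hv)) haX

/-- the support of a walk, as a finset, is connected -/
lemma cn_walk_support {a b : V} (w : G.Walk a b) : IsConnSub G w.support.toFinset := by
  induction w with
  | nil =>
      simp only [SimpleGraph.Walk.support_nil, List.toFinset_cons, List.toFinset_nil,
        LawfulSingleton.insert_empty_eq]
      exact cn_singleton _
  | @cons u c d h p ih =>
      have : (SimpleGraph.Walk.cons h p).support.toFinset = insert u p.support.toFinset := by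
        simp
      rw [this]
      exact cn_insert ih (by simp) h.symm



noncomputable def comps' (G : SimpleGraph V) (U : Finset V) : Finset (Finset V) :=
  comps G U

lemma mem_comps_iff {U C : Finset V} :
    C ∈ comps' G U ↔ C ⊆ U ∧ IsConnSub G C ∧
      ∀ D : Finset V, C ⊆ D → D ⊆ U → IsConnSub G D → D = C := by
  simp [comps', comps]

lemma comps_subset {U C : Finset V} (h : C ∈ comps' G U) : C ⊆ U := (mem_comps_iff.1 h).1
lemma comps_cn {U C : Finset V} (h : C ∈ comps' G U) : IsConnSub G C := (mem_comps_iff.1 h).2.1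
lemma comps_max {U C : Finset V} (h : C ∈ comps' G U) :
    ∀ D : Finset V, C ⊆ D → D ⊆ U → IsConnSub G D → D = C := (mem_comps_iff.1 h).2.2
lemma comps_nonempty {U C : Finset V} (h : C ∈ comps' G U) : C.Nonempty :=
  cn_nonempty (comps_cn h)

lemma comps_cover {U : Finset V} {a : V} (ha : a ∈ U) : ∃ C ∈ comps' G U, a ∈ C := by
  classical
  set T : Finset (Finset V) := U.powerset.filter (fun D => a ∈ D ∧ IsConnSub G D) with hT
  have hTne : T.Nonempty := by
    refine ⟨{a}, ?_⟩
    simp [hT, Finset.singleton_subset_iff, ha, cn_singleton]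
  obtain ⟨C, hC, hmax⟩ := T.exists_max_image Finset.card hTne
  simp only [hT, Finset.mem_filter, Finset.mem_powerset] at hC
  refine ⟨C, mem_comps_iff.2 ⟨hC.1, hC.2.2, fun D hCD hDU hD => ?_⟩, hC.2.1⟩
  have hDT : D ∈ T := by
    simp only [hT, Finset.mem_filter, Finset.mem_powerset]
    exact ⟨hDU, hCD hC.2.1, hD⟩
  exact (Finset.eq_of_subset_of_card_le hCD (hmax D hDT)).symm

lemma comps_disjoint {U C C' : Finset V} (hC : C ∈ comps' G U) (hC' : C' ∈ comps' G U)
    (hne : C ≠ C') : Disjoint C C' := by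
  rw [Finset.disjoint_left]
  intro x hx hx'
  have hu : IsConnSub G (C ∪ C') :=
    cn_union_common (comps_cn hC) (comps_cn hC') hx hx'
  have h1 := comps_max hC (C ∪ C') Finset.subset_union_left
    (Finset.union_subset (comps_subset hC) (comps_subset hC')) hu
  have h2 := comps_max hC' (C ∪ C') Finset.subset_union_right
    (Finset.union_subset (comps_subset hC) (comps_subset hC')) hu
  exact hne (h1.symm.trans h2)

lemma comps_not_adj {U C C' : Finset V} (hC : C ∈ comps' G U) (hC' : C' ∈ comps' G U)
    (hne : C ≠ C') : ∀ a ∈ C, ∀ b ∈ C', ¬G.Adj a b := by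
  intro a ha b hb hab
  have hu : IsConnSub G (C ∪ C') :=
    cn_union_adj (comps_cn hC) (comps_cn hC') ha hb hab
  have h1 := comps_max hC (C ∪ C') Finset.subset_union_left
    (Finset.union_subset (comps_subset hC) (comps_subset hC')) hu
  have h2 := comps_max hC' (C ∪ C') Finset.subset_union_right
    (Finset.union_subset (comps_subset hC) (comps_subset hC')) hu
  exact hne (h1.symm.trans h2)

lemma sup_comps_eq (U : Finset V) : (comps' G U).sup id = U := by
  apply Finset.Subset.antisymm
  · intro a ha
    obtain ⟨C, hC, haC⟩ := mem_sup_id.1 ha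
    exact comps_subset hC haC
  · intro a ha
    obtain ⟨C, hC, haC⟩ := comps_cover (G := G) ha
    exact mem_sup_id.2 ⟨C, hC, haC⟩

private lemma attach_key {A : Finset V} :
    ∀ {c d : V} (w : G.Walk c d), (∀ v ∈ w.support, v ∈ A) → c ≠ d →
      ∃ t, G.Adj t d ∧ okWalk G (A.erase d) c t := by
  intro c d w
  induction w with
  | nil => intro _ h; exact absurd rfl h
  | @cons u e d h p ih =>
      intro hsupp hne
      by_cases he : e = d
      · subst he
        exact ⟨u, h, okWalk_refl (Finset.mem_erase.2 ⟨hne, hsupp u (by simp)⟩)⟩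
      · obtain ⟨t, ht, hwt⟩ := ih (fun z hz => hsupp z (by simp [hz])) he
        refine ⟨t, ht, okWalk_trans (okWalk_adj ?_ ?_ h) hwt⟩
        · exact Finset.mem_erase.2 ⟨hne, hsupp u (by simp)⟩
        · exact Finset.mem_erase.2 ⟨he, hsupp e (by simp)⟩

/-- every component of `A.erase s` is attached to `s` when `A` is connected -/
lemma comps_attach {A : Finset V} {s : V} (hA : IsConnSub G A) (hs : s ∈ A)
    {Q : Finset V} (hQ : Q ∈ comps' G (A.erase s)) : ∃ t ∈ Q, G.Adj t s := by
  obtain ⟨a, haQ⟩ := comps_nonempty hQ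
  have haA : a ∈ A := (Finset.erase_subset _ _) (comps_subset hQ haQ)
  have hane : a ≠ s := Finset.ne_of_mem_erase (comps_subset hQ haQ)
  obtain ⟨w, hw⟩ := (cn_iff.1 hA).2 a haA s hs
  obtain ⟨t, hts, hwt⟩ := attach_key w hw hane
  -- show t ∈ Q by maximality
  obtain ⟨w', hw'⟩ := hwt
  have hsupp : w'.support.toFinset ⊆ A.erase s := fun z hz => hw' z (by simpa using hz)
  have hcn : IsConnSub G (Q ∪ w'.support.toFinset) :=
    cn_union_common (comps_cn hQ) (cn_walk_support w') haQ (by simp)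
  have := comps_max hQ (Q ∪ w'.support.toFinset) Finset.subset_union_left
    (Finset.union_subset (comps_subset hQ) hsupp) hcn
  refine ⟨t, ?_, hts⟩
  rw [← this]
  simp [SimpleGraph.Walk.end_mem_support]

/-- separation: a connected subset of a disjoint nonadjacent union lies in one part -/
lemma subset_part {F : Finset (Finset V)}
    (hdisj : ∀ P ∈ F, ∀ Q ∈ F, P ≠ Q → Disjoint P Q)
    (hadj : ∀ P ∈ F, ∀ Q ∈ F, P ≠ Q → ∀ a ∈ P, ∀ b ∈ Q, ¬G.Adj a b)
    {D P : Finset V} (hD : IsConnSub G D) (hsub : D ⊆ F.sup id)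
    {a : V} (haD : a ∈ D) (haP : a ∈ P) (hP : P ∈ F) : D ⊆ P := by
  set E := (F.erase P).sup id with hE
  have hPE : Disjoint P E := by
    rw [Finset.disjoint_left]
    intro x hx hxE
    obtain ⟨Q, hQ, hxQ⟩ := mem_sup_id.1 hxE
    have hQF : Q ∈ F := Finset.mem_of_mem_erase hQ
    have hQP : Q ≠ P := Finset.ne_of_mem_erase hQ
    exact (Finset.disjoint_left.1 (hdisj P hP Q hQF (Ne.symm hQP)) hx) hxQ
  have hadjPE : ∀ x ∈ P, ∀ y ∈ E, ¬G.Adj x y := by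
    intro x hx y hyE
    obtain ⟨Q, hQ, hyQ⟩ := mem_sup_id.1 hyE
    exact hadj P hP Q (Finset.mem_of_mem_erase hQ) (Ne.symm (Finset.ne_of_mem_erase hQ)) x hx y hyQ
  have hcover : D ⊆ P ∪ E := by
    intro b hb
    obtain ⟨Q, hQ, hbQ⟩ := mem_sup_id.1 (hsub hb)
    by_cases hQP : Q = P
    · subst hQP; exact Finset.mem_union_left _ hbQ
    · exact Finset.mem_union_right _ (mem_sup_id.2 ⟨Q, Finset.mem_erase.2 ⟨hQP, hQ⟩, hbQ⟩)
  exact cn_subset_of_separated hD hcover hPE hadjPE haD haP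

/-- characterization of components of a separated union -/
lemma comps_eq_of_parts {F : Finset (Finset V)}
    (hconn : ∀ P ∈ F, IsConnSub G P)
    (hne : ∀ P ∈ F, P.Nonempty)
    (hdisj : ∀ P ∈ F, ∀ Q ∈ F, P ≠ Q → Disjoint P Q)
    (hadj : ∀ P ∈ F, ∀ Q ∈ F, P ≠ Q → ∀ a ∈ P, ∀ b ∈ Q, ¬G.Adj a b) :
    comps' G (F.sup id) = F := by
  apply Finset.Subset.antisymm
  · intro C hC
    obtain ⟨a, haC⟩ := comps_nonempty hC
    obtain ⟨P, hP, haP⟩ := mem_sup_id.1 (comps_subset hC haC)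
    have hCP : C ⊆ P := subset_part hdisj hadj (comps_cn hC) (comps_subset hC) haC haP hP
    have := comps_max hC P hCP (Finset.le_sup (f := id) hP) (hconn P hP)
    exact this ▸ hP
  · intro P hP
    refine mem_comps_iff.2 ⟨Finset.le_sup (f := id) hP, hconn P hP, fun D hPD hDU hD => ?_⟩
    obtain ⟨a, haP⟩ := hne P hP
    exact Finset.Subset.antisymm (subset_part hdisj hadj hD hDU (hPD haP) haP hP) hPD

/-- removing a suitable vertex keeps connectivity -/
lemma cn_erase_exists : ∀ (n : ℕ) (X : Finset V), X.card ≤ n → 2 ≤ X.card →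
    IsConnSub G X → ∀ x ∈ X, ∃ u ∈ X, u ≠ x ∧ IsConnSub G (X.erase u) := by
  intro n
  induction n with
  | zero => intro X h h2; omega
  | succ n IH =>
    intro X hXn h2 hX x hx
    -- pick y ∈ X, y ≠ x
    have : (X.erase x).Nonempty := by
      rw [← Finset.card_pos, Finset.card_erase_of_mem hx]; omega
    obtain ⟨y, hy⟩ := this
    have hyx : y ≠ x := Finset.ne_of_mem_erase hy
    have hyX : y ∈ X := Finset.mem_of_mem_erase hy
    by_cases hcn : IsConnSub G (X.erase y)
    · exact ⟨y, hyX, hyx, hcn⟩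
    set X' := X.erase y with hX'
    have hxX' : x ∈ X' := Finset.mem_erase.2 ⟨fun h => hyx h.symm, hx⟩
    obtain ⟨Qx, hQx, hxQx⟩ := comps_cover (G := G) hxX'
    have hexQ : ∃ Q ∈ comps' G X', Q ≠ Qx := by
      by_contra hno
      push_neg at hno
      have : comps' G X' ⊆ {Qx} := fun Q hQ => Finset.mem_singleton.2 (hno Q hQ)
      have hsup : (comps' G X').sup id ⊆ Qx := by
        intro a ha
        obtain ⟨Q, hQ, haQ⟩ := mem_sup_id.1 ha
        rwa [Finset.mem_singleton.1 (this hQ)] at haQ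
      rw [sup_comps_eq] at hsup
      have : X' = Qx := Finset.Subset.antisymm hsup (comps_subset hQx)
      exact hcn (this ▸ comps_cn hQx)
    obtain ⟨Q, hQ, hQne⟩ := hexQ
    obtain ⟨t, htQ, hts⟩ := comps_attach hX hyX hQ
    set Y := insert y Q with hY
    have hcnY : IsConnSub G Y := cn_insert (comps_cn hQ) htQ hts
    have hyQ : y ∉ Q := fun h => (Finset.mem_erase.1 (comps_subset hQ h)).1 rfl
    have hxY : x ∉ Y := by
      simp only [hY, Finset.mem_insert]
      rintro (h | h)
      · exact hyx h.symm
      · exact (Finset.disjoint_left.1 (comps_disjoint hQ hQx hQne) h) hxQx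
    have hYX : Y ⊆ X := by
      intro a ha
      rcases Finset.mem_insert.1 ha with h | h
      · exact h ▸ hyX
      · exact Finset.mem_of_mem_erase (comps_subset hQ h)
    have hcard2 : 2 ≤ Y.card := by
      obtain ⟨q, hq⟩ := comps_nonempty hQ
      rw [hY, Finset.card_insert_of_notMem hyQ]
      have : 0 < Q.card := Finset.card_pos.2 ⟨q, hq⟩
      omega
    have hYlt : Y.card < X.card := Finset.card_lt_card ⟨hYX, fun h => hxY (h hx)⟩
    obtain ⟨u, huY, huy, hcnYu⟩ := IH Y (by omega) hcard2 hcnY y (by simp [hY])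
    have huQ : u ∈ Q := by
      rcases Finset.mem_insert.1 huY with h | h
      · exact absurd h huy
      · exact h
    have hux : u ≠ x := fun h => hxY (h ▸ huY)
    refine ⟨u, hYX huY, hux, ?_⟩
    -- X.erase u = (Y.erase u) ∪ insert y (((comps' G X').erase Q).sup id)
    set E := ((comps' G X').erase Q).sup id with hE
    have huE : u ∉ E := by
      intro h
      obtain ⟨R, hR, huR⟩ := mem_sup_id.1 h
      exact (Finset.disjoint_left.1
        (comps_disjoint hQ (Finset.mem_of_mem_erase hR) (Ne.symm (Finset.ne_of_mem_erase hR))) huQ) huR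
    have hXsplit : X' = Q ∪ E := by
      conv_lhs => rw [← sup_comps_eq (G := G) X']
      rw [← Finset.insert_erase hQ, Finset.sup_insert]
      rfl
    have hsetEq : X.erase u = (Y.erase u) ∪ insert y E := by
      have hXiy : X = insert y X' := (Finset.insert_erase hyX).symm
      have hXeq : X = insert y (Q ∪ E) := by rw [hXiy, hXsplit]
      ext a
      simp only [hXeq, hY, Finset.mem_erase, Finset.mem_union, Finset.mem_insert]
      constructor
      · rintro ⟨hau, (rfl | haQ | haE)⟩
        · exact Or.inl ⟨hau, Or.inl rfl⟩
        · exact Or.inl ⟨hau, Or.inr haQ⟩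
        · exact Or.inr (Or.inr haE)
      · rintro (⟨hau, (rfl | haQ)⟩ | (rfl | haE))
        · exact ⟨hau, Or.inl rfl⟩
        · exact ⟨hau, Or.inr (Or.inl haQ)⟩
        · exact ⟨fun h => huy h.symm, Or.inl rfl⟩
        · exact ⟨fun h => huE (h ▸ haE), Or.inr (Or.inr haE)⟩
      
    rw [hsetEq]
    have hstar : IsConnSub G (insert y E) := by
      refine cn_star (fun P hP => comps_cn (Finset.mem_of_mem_erase hP)) (fun P hP => ?_)
      exact comps_attach hX hyX (Finset.mem_of_mem_erase hP)
    refine cn_union_common hcnYu hstar (p := y) ?_ (by simp)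
    exact Finset.mem_erase.2 ⟨fun h => huy h.symm, by simp [hY]⟩



/-- one sliding move within ambient set `S` -/
def Step (G : SimpleGraph V) (S X Y : Finset V) : Prop :=
  X ⊆ S ∧ Y ⊆ S ∧ IsConnSub G X ∧ IsConnSub G Y ∧ IsConnSub G (X ∪ Y) ∧
  (X \ Y).card = 1 ∧ (Y \ X).card = 1

def Reach (G : SimpleGraph V) (S : Finset V) : Finset V → Finset V → Prop :=
  Relation.ReflTransGen (Step G S)

lemma step_symm {S X Y : Finset V} (h : Step G S X Y) : Step G S Y X := by
  obtain ⟨h1, h2, h3, h4, h5, h6, h7⟩ := h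
  exact ⟨h2, h1, h4, h3, by rwa [Finset.union_comm], h7, h6⟩

lemma step_card {S X Y : Finset V} (h : Step G S X Y) : X.card = Y.card := by
  obtain ⟨-, -, -, -, -, h6, h7⟩ := h
  have hX := Finset.card_sdiff_add_card_inter X Y
  have hY := Finset.card_sdiff_add_card_inter Y X
  rw [Finset.inter_comm] at hY
  rw [h6] at hX
  rw [h7] at hY
  omega

lemma reach_refl {S X : Finset V} : Reach G S X X := Relation.ReflTransGen.refl

lemma reach_trans {S X Y Z : Finset V} (h1 : Reach G S X Y) (h2 : Reach G S Y Z) :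
    Reach G S X Z := Relation.ReflTransGen.trans h1 h2

lemma reach_symm {S X Y : Finset V} (h : Reach G S X Y) : Reach G S Y X := by
  induction h with
  | refl => exact reach_refl
  | tail _ hstep ih => exact reach_trans (Relation.ReflTransGen.single (step_symm hstep)) ih

lemma reach_mono {S S' X Y : Finset V} (hS : S ⊆ S') (h : Reach G S X Y) :
    Reach G S' X Y := by
  refine Relation.ReflTransGen.mono ?_ _ _ h
  rintro a b ⟨h1, h2, h3, h4, h5, h6, h7⟩
  exact ⟨h1.trans hS, h2.trans hS, h3, h4, h5, h6, h7⟩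

lemma reach_card {S X Y : Finset V} (h : Reach G S X Y) : X.card = Y.card := by
  induction h with
  | refl => rfl
  | tail _ hstep ih => exact ih.trans (step_card hstep)

lemma swap_sdiff1 {A : Finset V} {u v : V} (hu : u ∈ A) (hv : v ∉ A) :
    A \ insert v (A.erase u) = {u} := by
  ext a
  simp only [Finset.mem_sdiff, Finset.mem_insert, Finset.mem_erase, Finset.mem_singleton]
  constructor
  · rintro ⟨haA, hno⟩
    push_neg at hno
    by_contra hau
    exact (hno.2 hau haA).elim
  · rintro rfl
    push_neg
    exact ⟨hu, fun h => absurd (h ▸ hu) hv, fun h => absurd rfl h⟩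

lemma swap_sdiff2 {A : Finset V} {u v : V} (hu : u ∈ A) (hv : v ∉ A) :
    insert v (A.erase u) \ A = {v} := by
  ext a
  simp only [Finset.mem_sdiff, Finset.mem_insert, Finset.mem_erase, Finset.mem_singleton]
  constructor
  · rintro ⟨rfl | ⟨_, haA⟩, hnA⟩
    · rfl
    · exact absurd haA hnA
  · rintro rfl
    exact ⟨Or.inl rfl, hv⟩

lemma union_swap {A : Finset V} {u v : V} (hu : u ∈ A) :
    A ∪ insert v (A.erase u) = insert v A := by
  ext a
  simp only [Finset.mem_union, Finset.mem_insert, Finset.mem_erase]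
  constructor
  · rintro (h | rfl | ⟨_, h⟩) <;> tauto
  · rintro (rfl | h)
    · exact Or.inr (Or.inl rfl)
    · exact Or.inl h

lemma card_swap {A : Finset V} {u v : V} (hu : u ∈ A) (hv : v ∉ A) :
    (insert v (A.erase u)).card = A.card := by
  have huv : v ∉ A.erase u := fun h => hv (Finset.mem_of_mem_erase h)
  rw [Finset.card_insert_of_notMem huv, Finset.card_erase_of_mem hu]
  have : 0 < A.card := Finset.card_pos.2 ⟨u, hu⟩
  omega

lemma step_swap {S A : Finset V} {u v : V} (hA : IsConnSub G A) (hAS : A ⊆ S)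
    (hu : u ∈ A) (hv : v ∉ A) (hvS : v ∈ S)
    (hA' : IsConnSub G (insert v (A.erase u)))
    (hins : IsConnSub G (insert v A)) :
    Step G S A (insert v (A.erase u)) := by
  refine ⟨hAS, ?_, hA, hA', ?_, ?_, ?_⟩
  · intro a ha
    rcases Finset.mem_insert.1 ha with rfl | ha
    · exact hvS
    · exact hAS (Finset.mem_of_mem_erase ha)
  · rwa [union_swap hu]
  · rw [swap_sdiff1 hu hv]; simp
  · rw [swap_sdiff2 hu hv]; simp

def minsize (F : Finset (Finset V)) : ℕ :=
  if h : F.Nonempty then (F.image Finset.card).min' (h.image _) else 0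

lemma minsize_le {F : Finset (Finset V)} {P : Finset V} (h : P ∈ F) :
    minsize F ≤ P.card := by
  rw [minsize, dif_pos ⟨P, h⟩]
  exact Finset.min'_le _ _ (Finset.mem_image_of_mem _ h)

lemma minsize_exists {F : Finset (Finset V)} (h : F.Nonempty) :
    ∃ P ∈ F, P.card = minsize F := by
  rw [minsize, dif_pos h]
  obtain ⟨P, hP, hPc⟩ := Finset.mem_image.1 ((F.image Finset.card).min'_mem (h.image _))
  exact ⟨P, hP, hPc⟩

lemma minsize_le_of_forall {F : Finset (Finset V)} {c : ℕ} (h : ∀ P ∈ F, P.card ≤ c) :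
    minsize F ≤ c := by
  rcases F.eq_empty_or_nonempty with rfl | hne
  · simp [minsize]
  · obtain ⟨P, hP, hPc⟩ := minsize_exists hne
    exact hPc ▸ h P hP

lemma sup_eq_part_union {F : Finset (Finset V)} {P : Finset V} (h : P ∈ F) :
    F.sup id = P ∪ (F.erase P).sup id := by
  conv_lhs => rw [← Finset.insert_erase h]
  rw [Finset.sup_insert]
  rfl

lemma sup_split {F J : Finset (Finset V)} (h : J ⊆ F) :
    F.sup id = J.sup id ∪ (F \ J).sup id := by
  ext a
  simp only [Finset.mem_union, mem_sup_id]
  constructor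
  · rintro ⟨P, hP, haP⟩
    by_cases hPJ : P ∈ J
    · exact Or.inl ⟨P, hPJ, haP⟩
    · exact Or.inr ⟨P, Finset.mem_sdiff.2 ⟨hP, hPJ⟩, haP⟩
  · rintro (⟨P, hP, haP⟩ | ⟨P, hP, haP⟩)
    · exact ⟨P, h hP, haP⟩
    · exact ⟨P, (Finset.mem_sdiff.1 hP).1, haP⟩



lemma SLrec : ∀ (n : ℕ) (S : Finset V) (s : V) (F : Finset (Finset V)),
    IsConnSub G S → s ∈ S → IsConnSub G (S.erase s) →
    (∀ P ∈ F, IsConnSub G P) →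
    (∀ P ∈ F, P.Nonempty) →
    (∀ P ∈ F, ∀ Q ∈ F, P ≠ Q → Disjoint P Q) →
    (∀ P ∈ F, ∀ Q ∈ F, P ≠ Q → ∀ a ∈ P, ∀ b ∈ Q, ¬G.Adj a b) →
    (∀ P ∈ F, ∃ t ∈ P, G.Adj t s) →
    F.sup id ⊆ S.erase s →
    (F.sup id).card + 1 < S.card →
    F.card * (S.card + 1) + minsize F ≤ n →
    ∃ A', Reach G S (insert s (F.sup id)) A' ∧ A' ⊆ S.erase s ∧ IsConnSub G A' ∧
      A'.card = (F.sup id).card + 1 := by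
  intro n
  induction n using Nat.strong_induction_on with
  | _ n IH =>
  intro S s F hS hsS hS' hconn hne hdisj hadj hatt hsub hcard hmeas
  have hsSup : s ∉ F.sup id := fun h => (Finset.mem_erase.1 (hsub h)).1 rfl
  have hsubS : F.sup id ⊆ S := hsub.trans (Finset.erase_subset _ _)
  set A := insert s (F.sup id) with hAdef
  have hA : IsConnSub G A := cn_star hconn hatt
  have hAS : A ⊆ S := by
    intro a ha
    rcases Finset.mem_insert.1 ha with rfl | ha
    · exact hsS
    · exact hsubS ha
  have hAcard : A.card = (F.sup id).card + 1 := Finset.card_insert_of_notMem hsSup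
  -- the unified recursion epilogue
  have recurse : ∀ (F' : Finset (Finset V)) (u v : V),
      (∀ P ∈ F', IsConnSub G P) → (∀ P ∈ F', P.Nonempty) →
      (∀ P ∈ F', ∀ Q ∈ F', P ≠ Q → Disjoint P Q) →
      (∀ P ∈ F', ∀ Q ∈ F', P ≠ Q → ∀ a ∈ P, ∀ b ∈ Q, ¬G.Adj a b) →
      (∀ P ∈ F', ∃ t' ∈ P, G.Adj t' s) →
      F'.sup id ⊆ S.erase s →
      insert s (F'.sup id) = insert v (A.erase u) →
      u ∈ A → v ∉ A → v ∈ S →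
      IsConnSub G (insert v A) →
      F'.card * (S.card + 1) + minsize F' < n →
      ∃ A', Reach G S A A' ∧ A' ⊆ S.erase s ∧ IsConnSub G A' ∧
        A'.card = (F.sup id).card + 1 := by
    intro F' u v hconn' hne' hdisj' hadj' hatt' hsub' hA'eq huA hvA hvS hins hm
    have hs' : s ∉ F'.sup id := fun h => (Finset.mem_erase.1 (hsub' h)).1 rfl
    have hA'cn : IsConnSub G (insert v (A.erase u)) := hA'eq ▸ cn_star hconn' hatt'
    have hstep : Step G S A (insert v (A.erase u)) := step_swap hA hAS huA hvA hvS hA'cn hins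
    have hcards : (F'.sup id).card + 1 = A.card := by
      rw [← Finset.card_insert_of_notMem hs', hA'eq, card_swap huA hvA]
    obtain ⟨A'', hr, h1, h2, h3⟩ := IH _ hm S s F' hS hsS hS' hconn' hne' hdisj' hadj'
      hatt' hsub' (by omega) le_rfl
    rw [hA'eq] at hr
    exact ⟨A'', reach_trans (Relation.ReflTransGen.single hstep) hr, h1, h2, by omega⟩
  rcases Finset.eq_empty_or_nonempty F with rfl | hFne
  · -- F = ∅ : A = {s}
    have hAs : A = {s} := by simp [hAdef]
    have h1 : ({s} : Finset V) ⊆ S := by simpa using hsS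
    have h2 : (S \ {s}).Nonempty := by
      rw [← Finset.card_pos, Finset.card_sdiff_of_subset h1]
      simp only [Finset.sup_empty, Finset.bot_eq_empty, Finset.card_empty] at hcard
      simp only [Finset.card_singleton]
      omega
    obtain ⟨y, v, hy, hvS, hvny, hadj'⟩ := exit_edge hS h1 ⟨s, by simp⟩ h2
    have hys : y = s := by simpa using hy
    rw [hys] at hadj'
    have hvs : v ≠ s := by simpa [hys] using hvny
    have hstep : Step G S A {v} := by
      rw [hAs]
      refine ⟨h1, by simpa using hvS, cn_singleton _, cn_singleton _, ?_, ?_, ?_⟩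
      · have : ({s} : Finset V) ∪ {v} = insert v {s} := by ext a; simp [or_comm]
        rw [this]
        exact cn_insert (cn_singleton _) (by simp) hadj'
      · rw [show ({s} : Finset V) \ {v} = {s} by ext a; simp; rintro rfl; exact hvs.symm]
        simp
      · rw [show ({v} : Finset V) \ {s} = {v} by ext a; simp; rintro rfl; exact hvs]
        simp
    refine ⟨{v}, Relation.ReflTransGen.single hstep, ?_, cn_singleton _, ?_⟩
    · intro a ha
      rw [Finset.mem_singleton.1 ha]
      exact Finset.mem_erase.2 ⟨hvs, hvS⟩
    · simp
  by_cases hF1 : F.card = 1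
  · -- F = {Γ}
    obtain ⟨Γ, rfl⟩ := Finset.card_eq_one.1 hF1
    have hsupΓ : ({Γ} : Finset (Finset V)).sup id = Γ := Finset.sup_singleton
    have hΓcn : IsConnSub G Γ := hconn Γ (by simp)
    have hΓS : Γ ⊆ S.erase s := by rw [← hsupΓ]; exact hsub
    have hΓne : Γ.Nonempty := hne Γ (by simp)
    have hSercard : (S.erase s).card = S.card - 1 := Finset.card_erase_of_mem hsS
    have hdne : ((S.erase s) \ Γ).Nonempty := by
      rw [← Finset.card_pos, Finset.card_sdiff_of_subset hΓS]
      rw [hsupΓ] at hcard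
      omega
    obtain ⟨y, v, hy, hvS, hvny, hyv⟩ := exit_edge hS' hΓS hΓne hdne
    have hvs : v ≠ s := (Finset.mem_erase.1 hvS).1
    have hsΓ : s ∉ Γ := fun h => (Finset.mem_erase.1 (hΓS h)).1 rfl
    have hAΓ : A = insert s Γ := by rw [hAdef, hsupΓ]
    have hvA : v ∉ A := by
      rw [hAΓ]
      simp only [Finset.mem_insert]
      rintro (rfl | h)
      · exact hvs rfl
      · exact hvny h
    have herase : A.erase s = Γ := by rw [hAΓ, Finset.erase_insert hsΓ]
    have hA' : IsConnSub G (insert v (A.erase s)) := by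
      rw [herase]; exact cn_insert hΓcn hy hyv
    have hins : IsConnSub G (insert v A) := by
      refine cn_insert hA ?_ hyv
      rw [hAΓ]; exact Finset.mem_insert_of_mem hy
    have hstep : Step G S A (insert v (A.erase s)) :=
      step_swap hA hAS (by rw [hAΓ]; simp) hvA ((Finset.erase_subset _ _) hvS) hA' hins
    refine ⟨insert v (A.erase s), Relation.ReflTransGen.single hstep, ?_, hA', ?_⟩
    · rw [herase]
      intro a ha
      rcases Finset.mem_insert.1 ha with rfl | ha
      · exact hvS
      · exact hΓS ha
    · rw [card_swap (by rw [hAΓ]; simp) hvA, hAcard]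
  -- main case : 2 ≤ F.card
  have hF2 : 2 ≤ F.card := by
    have := Finset.card_pos.2 hFne
    omega
  obtain ⟨Δ, hΔF, hΔmin⟩ := minsize_exists hFne
  obtain ⟨Γ, hΓF, hΓΔ⟩ := Finset.exists_mem_ne (s := F) (by omega) Δ
  have hΓcn : IsConnSub G Γ := hconn Γ hΓF
  have hΓsup : Γ ⊆ F.sup id := by
    intro a ha; exact mem_sup_id.2 ⟨Γ, hΓF, ha⟩
  have hΓS : Γ ⊆ S.erase s := hΓsup.trans hsub
  have hΓne : Γ.Nonempty := hne Γ hΓF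
  have hSercard : (S.erase s).card = S.card - 1 := Finset.card_erase_of_mem hsS
  have hdne : ((S.erase s) \ Γ).Nonempty := by
    rw [← Finset.card_pos, Finset.card_sdiff_of_subset hΓS]
    have := Finset.card_le_card hΓsup
    omega
  obtain ⟨y, v, hy, hvS', hvny, hyv⟩ := exit_edge hS' hΓS hΓne hdne
  have hvs : v ≠ s := (Finset.mem_erase.1 hvS').1
  have hvS : v ∈ S := Finset.mem_of_mem_erase hvS'
  have hvSup : v ∉ F.sup id := by
    intro h
    obtain ⟨P, hP, hvP⟩ := mem_sup_id.1 h
    by_cases hPΓ : P = Γ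
    · exact hvny (hPΓ ▸ hvP)
    · exact hadj Γ hΓF P hP (fun h => hPΓ h.symm) y hy v hvP hyv
  have hvA : v ∉ A := by
    rw [hAdef]
    simp only [Finset.mem_insert]
    rintro (rfl | h)
    · exact hvs rfl
    · exact hvSup h
  have hyA : y ∈ A := Finset.mem_insert_of_mem (hΓsup hy)
  have hins : IsConnSub G (insert v A) := cn_insert hA hyA hyv
  set J := F.filter (fun P => ∃ a ∈ P, G.Adj a v) with hJdef
  have hJF : J ⊆ F := Finset.filter_subset _ _
  have hΓJ : Γ ∈ J := Finset.mem_filter.2 ⟨hΓF, y, hy, hyv⟩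
  have hminS : ∀ F' : Finset (Finset V), F'.sup id ⊆ S.erase s → minsize F' ≤ S.card := by
    intro F' hsub'
    refine minsize_le_of_forall (fun P hP => ?_)
    refine Finset.card_le_card (fun a ha => ?_)
    exact Finset.mem_of_mem_erase (hsub' (mem_sup_id.2 ⟨P, hP, ha⟩))
  by_cases hJ2 : 2 ≤ J.card
  · -- merge case
    set M := insert v (J.sup id) with hMdef
    have hMconn : IsConnSub G M :=
      cn_star (fun P hP => hconn P (hJF hP)) (fun P hP => (Finset.mem_filter.1 hP).2)
    have hvJsup : v ∉ J.sup id := by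
      intro h
      obtain ⟨P, hP, h'⟩ := mem_sup_id.1 h
      exact hvSup (mem_sup_id.2 ⟨P, hJF hP, h'⟩)
    have hMcard : 2 ≤ M.card := by
      have h1 : y ∈ J.sup id := mem_sup_id.2 ⟨Γ, hΓJ, hy⟩
      have h2 : 0 < (J.sup id).card := Finset.card_pos.2 ⟨y, h1⟩
      rw [hMdef, Finset.card_insert_of_notMem hvJsup]
      omega
    obtain ⟨u, huM, huv, hMu⟩ := cn_erase_exists M.card M le_rfl hMcard hMconn v (by simp [hMdef])
    have huJsup : u ∈ J.sup id := by
      rcases Finset.mem_insert.1 huM with rfl | h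
      · exact absurd rfl huv
      · exact h
    have huSup : u ∈ F.sup id := by
      obtain ⟨P, hP, h'⟩ := mem_sup_id.1 huJsup
      exact mem_sup_id.2 ⟨P, hJF hP, h'⟩
    have huA : u ∈ A := Finset.mem_insert_of_mem huSup
    have hus : u ≠ s := fun h => hsSup (h ▸ huSup)
    -- attachment of M.erase u
    obtain ⟨P₂, hP₂J, hP₂Γ⟩ := Finset.exists_mem_ne (s := J) (by omega) Γ
    obtain ⟨t₁, ht₁, ht₁s⟩ := hatt Γ hΓF
    obtain ⟨t₂, ht₂, ht₂s⟩ := hatt P₂ (hJF hP₂J)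
    have ht₁₂ : t₁ ≠ t₂ := by
      intro h
      exact (Finset.disjoint_left.1 (hdisj Γ hΓF P₂ (hJF hP₂J) (fun h' => hP₂Γ h'.symm)) ht₁)
        (h ▸ ht₂)
    have ht₁M : t₁ ∈ M := Finset.mem_insert_of_mem (mem_sup_id.2 ⟨Γ, hΓJ, ht₁⟩)
    have ht₂M : t₂ ∈ M := Finset.mem_insert_of_mem (mem_sup_id.2 ⟨P₂, hP₂J, ht₂⟩)
    have hattM : ∃ t ∈ M.erase u, G.Adj t s := by
      by_cases h : u = t₁
      · exact ⟨t₂, Finset.mem_erase.2 ⟨fun hh => ht₁₂ (h ▸ hh).symm, ht₂M⟩, ht₂s⟩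
      · exact ⟨t₁, Finset.mem_erase.2 ⟨fun hh => h hh.symm, ht₁M⟩, ht₁s⟩
    set F' := insert (M.erase u) (F \ J) with hF'def
    have hmemFJ : ∀ Q ∈ F \ J, Q ∈ F ∧ ¬∃ a ∈ Q, G.Adj a v := by
      intro Q hQ
      have h1 := Finset.mem_sdiff.1 hQ
      refine ⟨h1.1, fun h => h1.2 (Finset.mem_filter.2 ⟨h1.1, h⟩)⟩
    have hMQ : ∀ Q ∈ F \ J, Disjoint (M.erase u) Q ∧ ∀ a ∈ M.erase u, ∀ b ∈ Q, ¬G.Adj a b := by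
      intro Q hQ
      obtain ⟨hQF, hQnadj⟩ := hmemFJ Q hQ
      have hQnJ : Q ∉ J := (Finset.mem_sdiff.1 hQ).2
      constructor
      · rw [Finset.disjoint_left]
        intro x hx hxQ
        have hx' := Finset.mem_of_mem_erase hx
        rcases Finset.mem_insert.1 hx' with rfl | hx''
        · exact hvSup (mem_sup_id.2 ⟨Q, hQF, hxQ⟩)
        · obtain ⟨P, hP, hxP⟩ := mem_sup_id.1 hx''
          have hPQ : P ≠ Q := fun h => hQnJ (h ▸ hP)
          exact (Finset.disjoint_left.1 (hdisj P (hJF hP) Q hQF hPQ) hxP) hxQ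
      · intro a ha b hb hab
        have ha' := Finset.mem_of_mem_erase ha
        rcases Finset.mem_insert.1 ha' with rfl | ha''
        · exact hQnadj ⟨b, hb, hab.symm⟩
        · obtain ⟨P, hP, haP⟩ := mem_sup_id.1 ha''
          have hPQ : P ≠ Q := fun h => hQnJ (h ▸ hP)
          exact hadj P (hJF hP) Q hQF hPQ a haP b hb hab
    have hMune : (M.erase u).Nonempty := by
      rw [← Finset.card_pos, Finset.card_erase_of_mem huM]
      omega
    have hconn' : ∀ P ∈ F', IsConnSub G P := by
      intro P hP
      rcases Finset.mem_insert.1 hP with rfl | hP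
      · exact hMu
      · exact hconn P (hmemFJ P hP).1
    have hne' : ∀ P ∈ F', P.Nonempty := by
      intro P hP
      rcases Finset.mem_insert.1 hP with rfl | hP
      · exact hMune
      · exact hne P (hmemFJ P hP).1
    have hdisj' : ∀ P ∈ F', ∀ Q ∈ F', P ≠ Q → Disjoint P Q := by
      intro P hP Q hQ hPQ
      rcases Finset.mem_insert.1 hP with rfl | hP <;> rcases Finset.mem_insert.1 hQ with rfl | hQ
      · exact absurd rfl hPQ
      · exact (hMQ Q hQ).1
      · exact ((hMQ P hP).1).symm
      · exact hdisj P (hmemFJ P hP).1 Q (hmemFJ Q hQ).1 hPQ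
    have hadj' : ∀ P ∈ F', ∀ Q ∈ F', P ≠ Q → ∀ a ∈ P, ∀ b ∈ Q, ¬G.Adj a b := by
      intro P hP Q hQ hPQ a ha b hb hab
      rcases Finset.mem_insert.1 hP with rfl | hP <;> rcases Finset.mem_insert.1 hQ with rfl | hQ
      · exact absurd rfl hPQ
      · exact (hMQ Q hQ).2 a ha b hb hab
      · exact (hMQ P hP).2 b hb a ha hab.symm
      · exact hadj P (hmemFJ P hP).1 Q (hmemFJ Q hQ).1 hPQ a ha b hb hab
    have hatt' : ∀ P ∈ F', ∃ t' ∈ P, G.Adj t' s := by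
      intro P hP
      rcases Finset.mem_insert.1 hP with rfl | hP
      · exact hattM
      · exact hatt P (hmemFJ P hP).1
    have hsub' : F'.sup id ⊆ S.erase s := by
      rw [hF'def, Finset.sup_insert]
      intro a ha
      rcases Finset.mem_union.1 ha with ha | ha
      · have ha' := Finset.mem_of_mem_erase (ha : a ∈ M.erase u)
        rcases Finset.mem_insert.1 ha' with rfl | ha''
        · exact hvS'
        · obtain ⟨P, hP, h'⟩ := mem_sup_id.1 ha''
          exact hsub (mem_sup_id.2 ⟨P, hJF hP, h'⟩)
      · obtain ⟨P, hP, h'⟩ := mem_sup_id.1 ha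
        exact hsub (mem_sup_id.2 ⟨P, (hmemFJ P hP).1, h'⟩)
    have huFJ : u ∉ (F \ J).sup id := by
      intro h
      obtain ⟨Q, hQ, hQ'⟩ := mem_sup_id.1 h
      obtain ⟨P, hP, hP'⟩ := mem_sup_id.1 huJsup
      have hPQ : P ≠ Q := fun hh => (Finset.mem_sdiff.1 hQ).2 (hh ▸ hP)
      exact (Finset.disjoint_left.1 (hdisj P (hJF hP) Q (Finset.mem_sdiff.1 hQ).1 hPQ) hP') hQ'
    have hA'eq : insert s (F'.sup id) = insert v (A.erase u) := by
      have hsplit := sup_split hJF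
      ext x
      simp only [hF'def, Finset.sup_insert, hAdef, Finset.mem_insert, Finset.mem_union,
        Finset.mem_erase, hMdef, id, Finset.sup_eq_union]
      have hxFiff : x ∈ F.sup id ↔ x ∈ J.sup id ∨ x ∈ (F \ J).sup id := by
        rw [hsplit]; exact Finset.mem_union
      have f1 : x = s → x ≠ u := fun h hh => hus (hh.symm.trans h)
      have f2 : x = v → x ≠ u := fun h hh => huv (hh.symm.trans h)
      have f3 : x ∈ (F \ J).sup id → x ≠ u := fun h hh => huFJ (hh ▸ h)
      constructor
      · rintro (rfl | ⟨hxu, (rfl | hx)⟩ | hx)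
        · exact Or.inr ⟨f1 rfl, Or.inl rfl⟩
        · exact Or.inl rfl
        · exact Or.inr ⟨hxu, Or.inr (hxFiff.2 (Or.inl hx))⟩
        · exact Or.inr ⟨f3 hx, Or.inr (hxFiff.2 (Or.inr hx))⟩
      · rintro (rfl | ⟨hxu, (rfl | hx)⟩)
        · exact Or.inr (Or.inl ⟨f2 rfl, Or.inl rfl⟩)
        · exact Or.inl rfl
        · rcases hxFiff.1 hx with h' | h'
          · exact Or.inr (Or.inl ⟨hxu, Or.inr h'⟩)
          · exact Or.inr (Or.inr h')
    -- measure
    have hm : F'.card * (S.card + 1) + minsize F' < n := by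
      obtain ⟨k, hk⟩ : ∃ k, F.card = k + 2 := ⟨F.card - 2, by omega⟩
      have h1 : minsize F' ≤ S.card := hminS F' hsub'
      have hFJcard : (F \ J).card = F.card - J.card := Finset.card_sdiff_of_subset hJF
      have hJcard : J.card ≤ F.card := Finset.card_le_card hJF
      have h2 : F'.card ≤ k + 1 := by
        have hle := Finset.card_insert_le (M.erase u) (F \ J)
        rw [← hF'def] at hle
        omega
      have h3 : F'.card * (S.card + 1) ≤ (k + 1) * (S.card + 1) :=
        Nat.mul_le_mul_right _ h2
      have h5 : (k + 2) * (S.card + 1) = (k + 1) * (S.card + 1) + (S.card + 1) := by ring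
      rw [hk, h5] at hmeas
      omega
    exact recurse F' u v hconn' hne' hdisj' hadj' hatt' hsub' hA'eq huA hvA hvS hins hm
  · -- sliding case : J = {Γ}
    have hJ1 : J.card ≤ 1 := by omega
    have hJeq : ∀ P ∈ J, P = Γ := by
      intro P hP
      exact Finset.card_le_one.1 hJ1 P hP Γ hΓJ
    have hnoadj : ∀ P ∈ F, P ≠ Γ → ∀ a ∈ P, ¬G.Adj a v := by
      intro P hP hPΓ a ha hav
      exact hPΓ (hJeq P (Finset.mem_filter.2 ⟨hP, a, ha, hav⟩))
    have hΔΓ : Δ ≠ Γ := fun h => hΓΔ h.symm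
    obtain ⟨t, htΔ, hts⟩ := hatt Δ hΔF
    have hΔcn : IsConnSub G Δ := hconn Δ hΔF
    -- the new moving part
    set NP := insert v Γ with hNPdef
    have hNPcn : IsConnSub G NP := cn_insert hΓcn hy hyv
    have hNPatt : ∃ t' ∈ NP, G.Adj t' s := by
      obtain ⟨tΓ, htΓ, htΓs⟩ := hatt Γ hΓF
      exact ⟨tΓ, Finset.mem_insert_of_mem htΓ, htΓs⟩
    have hNPQ : ∀ Q, Q ∈ F → Q ≠ Γ →
        Disjoint NP Q ∧ ∀ a ∈ NP, ∀ b ∈ Q, ¬G.Adj a b := by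
      intro Q hQ hQΓ
      constructor
      · rw [Finset.disjoint_left]
        intro x hx hxQ
        rcases Finset.mem_insert.1 hx with rfl | hx
        · exact hvSup (mem_sup_id.2 ⟨Q, hQ, hxQ⟩)
        · exact (Finset.disjoint_left.1 (hdisj Γ hΓF Q hQ (fun h => hQΓ h.symm)) hx) hxQ
      · intro a ha b hb hab
        rcases Finset.mem_insert.1 ha with rfl | ha
        · exact hnoadj Q hQ hQΓ b hb hab.symm
        · exact hadj Γ hΓF Q hQ (fun h => hQΓ h.symm) a ha b hb hab
    set R := (F.erase Γ).erase Δ with hRdef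
    have hmemR : ∀ P ∈ R, P ∈ F ∧ P ≠ Γ ∧ P ≠ Δ := by
      intro P hP
      have h1 := Finset.mem_erase.1 hP
      have h2 := Finset.mem_erase.1 h1.2
      exact ⟨h2.2, h2.1, h1.1⟩
    have hΔeΓ : Δ ∈ F.erase Γ := Finset.mem_erase.2 ⟨hΔΓ, hΔF⟩
    have hsplitF : ∀ x, x ∈ F.sup id ↔ x ∈ Γ ∨ x ∈ Δ ∨ x ∈ R.sup id := by
      intro x
      rw [sup_eq_part_union hΓF, sup_eq_part_union hΔeΓ]
      simp [hRdef]
    have hsupR : ∀ x ∈ R.sup id, x ∈ F.sup id := by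
      intro x hx
      obtain ⟨P, hP, h'⟩ := mem_sup_id.1 hx
      exact mem_sup_id.2 ⟨P, (hmemR P hP).1, h'⟩
    by_cases hΔ1 : Δ.card = 1
    · -- victim dies
      have hΔt : Δ = {t} := by
        obtain ⟨z, hz⟩ := Finset.card_eq_one.1 hΔ1
        rw [hz] at htΔ ⊢
        rw [Finset.mem_singleton.1 htΔ]
      set F' := insert NP R with hF'def
      have huA : t ∈ A := Finset.mem_insert_of_mem (mem_sup_id.2 ⟨Δ, hΔF, htΔ⟩)
      have hts' : t ≠ s := by
        intro h
        exact hsSup (h ▸ (mem_sup_id.2 ⟨Δ, hΔF, htΔ⟩))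
      have htΓ' : t ∉ Γ :=
        fun h => (Finset.disjoint_left.1 (hdisj Δ hΔF Γ hΓF hΔΓ) htΔ) h
      have htR : t ∉ R.sup id := by
        intro h
        obtain ⟨P, hP, h'⟩ := mem_sup_id.1 h
        exact (Finset.disjoint_left.1 (hdisj Δ hΔF P (hmemR P hP).1
          (fun hh => (hmemR P hP).2.2 hh.symm)) htΔ) h'
      have htv : t ≠ v := fun h => hvSup (h ▸ (mem_sup_id.2 ⟨Δ, hΔF, htΔ⟩))
      have hconn' : ∀ P ∈ F', IsConnSub G P := by
        intro P hP
        rcases Finset.mem_insert.1 hP with rfl | hP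
        · exact hNPcn
        · exact hconn P (hmemR P hP).1
      have hne' : ∀ P ∈ F', P.Nonempty := by
        intro P hP
        rcases Finset.mem_insert.1 hP with rfl | hP
        · exact ⟨v, Finset.mem_insert_self _ _⟩
        · exact hne P (hmemR P hP).1
      have hdisj' : ∀ P ∈ F', ∀ Q ∈ F', P ≠ Q → Disjoint P Q := by
        intro P hP Q hQ hPQ
        rcases Finset.mem_insert.1 hP with rfl | hP <;>
          rcases Finset.mem_insert.1 hQ with rfl | hQ
        · exact absurd rfl hPQ
        · exact (hNPQ Q (hmemR Q hQ).1 (hmemR Q hQ).2.1).1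
        · exact ((hNPQ P (hmemR P hP).1 (hmemR P hP).2.1).1).symm
        · exact hdisj P (hmemR P hP).1 Q (hmemR Q hQ).1 hPQ
      have hadj' : ∀ P ∈ F', ∀ Q ∈ F', P ≠ Q → ∀ a ∈ P, ∀ b ∈ Q, ¬G.Adj a b := by
        intro P hP Q hQ hPQ a ha b hb hab
        rcases Finset.mem_insert.1 hP with rfl | hP <;>
          rcases Finset.mem_insert.1 hQ with rfl | hQ
        · exact absurd rfl hPQ
        · exact (hNPQ Q (hmemR Q hQ).1 (hmemR Q hQ).2.1).2 a ha b hb hab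
        · exact (hNPQ P (hmemR P hP).1 (hmemR P hP).2.1).2 b hb a ha hab.symm
        · exact hadj P (hmemR P hP).1 Q (hmemR Q hQ).1 hPQ a ha b hb hab
      have hatt' : ∀ P ∈ F', ∃ t' ∈ P, G.Adj t' s := by
        intro P hP
        rcases Finset.mem_insert.1 hP with rfl | hP
        · exact hNPatt
        · exact hatt P (hmemR P hP).1
      have hsub' : F'.sup id ⊆ S.erase s := by
        rw [hF'def, Finset.sup_insert]
        intro a ha
        rcases Finset.mem_union.1 ha with ha | ha
        · rcases Finset.mem_insert.1 (ha : a ∈ NP) with rfl | ha'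
          · exact hvS'
          · exact hΓS ha'
        · exact hsub (hsupR a ha)
      have hA'eq : insert s (F'.sup id) = insert v (A.erase t) := by
        ext x
        simp only [hF'def, Finset.sup_insert, hAdef, Finset.mem_insert, Finset.mem_union,
          Finset.mem_erase, hNPdef, id, Finset.sup_eq_union]
        have hxF := hsplitF x
        have hxΔ : x ∈ Δ ↔ x = t := by rw [hΔt]; exact Finset.mem_singleton
        have f1 : x = s → x ≠ t := fun h hh => hts' (hh.symm.trans h)
        have f2 : x = v → x ≠ t := fun h hh => htv (hh.symm.trans h)
        have f3 : x ∈ Γ → x ≠ t := fun h hh => htΓ' (hh ▸ h)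
        have f4 : x ∈ R.sup id → x ≠ t := fun h hh => htR (hh ▸ h)
        constructor
        · rintro (rfl | (rfl | hx) | hx)
          · exact Or.inr ⟨f1 rfl, Or.inl rfl⟩
          · exact Or.inl rfl
          · exact Or.inr ⟨f3 hx, Or.inr (hxF.2 (Or.inl hx))⟩
          · exact Or.inr ⟨f4 hx, Or.inr (hxF.2 (Or.inr (Or.inr hx)))⟩
        · rintro (rfl | ⟨hxt, (rfl | hx)⟩)
          · exact Or.inr (Or.inl (Or.inl rfl))
          · exact Or.inl rfl
          · rcases hxF.1 hx with h' | h' | h'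
            · exact Or.inr (Or.inl (Or.inr h'))
            · exact absurd (hxΔ.1 h') hxt
            · exact Or.inr (Or.inr h')
      have hm : F'.card * (S.card + 1) + minsize F' < n := by
        obtain ⟨k, hk⟩ : ∃ k, F.card = k + 2 := ⟨F.card - 2, by omega⟩
        have h1 : minsize F' ≤ S.card := hminS F' hsub'
        have hRcard : R.card = F.card - 2 := by
          rw [hRdef, Finset.card_erase_of_mem hΔeΓ, Finset.card_erase_of_mem hΓF]
          omega
        have h2 : F'.card ≤ k + 1 := by
          have hle := Finset.card_insert_le NP R
          rw [← hF'def] at hle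
          omega
        have h3 : F'.card * (S.card + 1) ≤ (k + 1) * (S.card + 1) :=
          Nat.mul_le_mul_right _ h2
        have h5 : (k + 2) * (S.card + 1) = (k + 1) * (S.card + 1) + (S.card + 1) := by ring
        rw [hk, h5] at hmeas
        omega
      exact recurse F' t v hconn' hne' hdisj' hadj' hatt' hsub' hA'eq huA hvA hvS hins hm
    · -- victim shrinks
      have hΔ2 : 2 ≤ Δ.card := by
        have := Finset.card_pos.2 (hne Δ hΔF)
        omega
      obtain ⟨u, huΔ, hut, hΔu⟩ := cn_erase_exists Δ.card Δ le_rfl hΔ2 hΔcn t htΔ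
      have huA : u ∈ A := Finset.mem_insert_of_mem (mem_sup_id.2 ⟨Δ, hΔF, huΔ⟩)
      have hus : u ≠ s := fun h => hsSup (h ▸ (mem_sup_id.2 ⟨Δ, hΔF, huΔ⟩))
      have huΓ : u ∉ Γ :=
        fun h => (Finset.disjoint_left.1 (hdisj Δ hΔF Γ hΓF hΔΓ) huΔ) h
      have huR : u ∉ R.sup id := by
        intro h
        obtain ⟨P, hP, h'⟩ := mem_sup_id.1 h
        exact (Finset.disjoint_left.1 (hdisj Δ hΔF P (hmemR P hP).1
          (fun hh => (hmemR P hP).2.2 hh.symm)) huΔ) h'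
      have huv : u ≠ v := fun h => hvSup (h ▸ (mem_sup_id.2 ⟨Δ, hΔF, huΔ⟩))
      set F' := insert NP (insert (Δ.erase u) R) with hF'def
      have hΔune : (Δ.erase u).Nonempty := by
        rw [← Finset.card_pos, Finset.card_erase_of_mem huΔ]
        omega
      have hattΔu : ∃ t' ∈ Δ.erase u, G.Adj t' s :=
        ⟨t, Finset.mem_erase.2 ⟨fun h => hut h.symm, htΔ⟩, hts⟩
      have hΔuQ : ∀ Q, Q ∈ F → Q ≠ Δ →
          Disjoint (Δ.erase u) Q ∧ ∀ a ∈ Δ.erase u, ∀ b ∈ Q, ¬G.Adj a b := by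
        intro Q hQ hQΔ
        constructor
        · exact Finset.disjoint_of_subset_left (Finset.erase_subset _ _)
            (hdisj Δ hΔF Q hQ (fun h => hQΔ h.symm))
        · intro a ha b hb hab
          exact hadj Δ hΔF Q hQ (fun h => hQΔ h.symm) a (Finset.mem_of_mem_erase ha) b hb hab
      have hNPΔu : Disjoint NP (Δ.erase u) ∧ ∀ a ∈ NP, ∀ b ∈ Δ.erase u, ¬G.Adj a b := by
        have h := hNPQ Δ hΔF hΔΓ
        exact ⟨Finset.disjoint_of_subset_right (Finset.erase_subset _ _) h.1,
          fun a ha b hb hab => h.2 a ha b (Finset.mem_of_mem_erase hb) hab⟩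
      have hconn' : ∀ P ∈ F', IsConnSub G P := by
        intro P hP
        rcases Finset.mem_insert.1 hP with rfl | hP
        · exact hNPcn
        rcases Finset.mem_insert.1 hP with rfl | hP
        · exact hΔu
        · exact hconn P (hmemR P hP).1
      have hne' : ∀ P ∈ F', P.Nonempty := by
        intro P hP
        rcases Finset.mem_insert.1 hP with rfl | hP
        · exact ⟨v, Finset.mem_insert_self _ _⟩
        rcases Finset.mem_insert.1 hP with rfl | hP
        · exact hΔune
        · exact hne P (hmemR P hP).1
      have hdisj' : ∀ P ∈ F', ∀ Q ∈ F', P ≠ Q → Disjoint P Q := by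
        intro P hP Q hQ hPQ
        rcases Finset.mem_insert.1 hP with rfl | hP <;>
          rcases Finset.mem_insert.1 hQ with rfl | hQ
        · exact absurd rfl hPQ
        · rcases Finset.mem_insert.1 hQ with rfl | hQ
          · exact hNPΔu.1
          · exact (hNPQ Q (hmemR Q hQ).1 (hmemR Q hQ).2.1).1
        · rcases Finset.mem_insert.1 hP with rfl | hP
          · exact hNPΔu.1.symm
          · exact ((hNPQ P (hmemR P hP).1 (hmemR P hP).2.1).1).symm
        · rcases Finset.mem_insert.1 hP with rfl | hP <;>
            rcases Finset.mem_insert.1 hQ with rfl | hQ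
          · exact absurd rfl hPQ
          · exact (hΔuQ Q (hmemR Q hQ).1 (fun h => (hmemR Q hQ).2.2 h)).1
          · exact ((hΔuQ P (hmemR P hP).1 (fun h => (hmemR P hP).2.2 h)).1).symm
          · exact hdisj P (hmemR P hP).1 Q (hmemR Q hQ).1 hPQ
      have hadj' : ∀ P ∈ F', ∀ Q ∈ F', P ≠ Q → ∀ a ∈ P, ∀ b ∈ Q, ¬G.Adj a b := by
        intro P hP Q hQ hPQ a ha b hb hab
        rcases Finset.mem_insert.1 hP with rfl | hP <;>
          rcases Finset.mem_insert.1 hQ with rfl | hQ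
        · exact absurd rfl hPQ
        · rcases Finset.mem_insert.1 hQ with rfl | hQ
          · exact hNPΔu.2 a ha b hb hab
          · exact (hNPQ Q (hmemR Q hQ).1 (hmemR Q hQ).2.1).2 a ha b hb hab
        · rcases Finset.mem_insert.1 hP with rfl | hP
          · exact hNPΔu.2 b hb a ha hab.symm
          · exact (hNPQ P (hmemR P hP).1 (hmemR P hP).2.1).2 b hb a ha hab.symm
        · rcases Finset.mem_insert.1 hP with rfl | hP <;>
            rcases Finset.mem_insert.1 hQ with rfl | hQ
          · exact absurd rfl hPQ
          · exact (hΔuQ Q (hmemR Q hQ).1 (fun h => (hmemR Q hQ).2.2 h)).2 a ha b hb hab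
          · exact (hΔuQ P (hmemR P hP).1 (fun h => (hmemR P hP).2.2 h)).2 b hb a ha hab.symm
          · exact hadj P (hmemR P hP).1 Q (hmemR Q hQ).1 hPQ a ha b hb hab
      have hatt' : ∀ P ∈ F', ∃ t' ∈ P, G.Adj t' s := by
        intro P hP
        rcases Finset.mem_insert.1 hP with rfl | hP
        · exact hNPatt
        rcases Finset.mem_insert.1 hP with rfl | hP
        · exact hattΔu
        · exact hatt P (hmemR P hP).1
      have hsub' : F'.sup id ⊆ S.erase s := by
        rw [hF'def, Finset.sup_insert, Finset.sup_insert]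
        intro a ha
        rcases Finset.mem_union.1 ha with ha | ha
        · rcases Finset.mem_insert.1 (ha : a ∈ NP) with rfl | ha'
          · exact hvS'
          · exact hΓS ha'
        rcases Finset.mem_union.1 ha with ha | ha
        · exact hsub (mem_sup_id.2 ⟨Δ, hΔF, Finset.mem_of_mem_erase (ha : a ∈ Δ.erase u)⟩)
        · exact hsub (hsupR a ha)
      have hA'eq : insert s (F'.sup id) = insert v (A.erase u) := by
        ext x
        simp only [hF'def, Finset.sup_insert, hAdef, Finset.mem_insert, Finset.mem_union,
          Finset.mem_erase, hNPdef, id, Finset.sup_eq_union]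
        have hxF := hsplitF x
        have f1 : x = s → x ≠ u := fun h hh => hus (hh.symm.trans h)
        have f2 : x = v → x ≠ u := fun h hh => huv (hh.symm.trans h)
        have f3 : x ∈ Γ → x ≠ u := fun h hh => huΓ (hh ▸ h)
        have f4 : x ∈ R.sup id → x ≠ u := fun h hh => huR (hh ▸ h)
        constructor
        · rintro (rfl | (rfl | hx) | ⟨hxu, hx⟩ | hx)
          · exact Or.inr ⟨f1 rfl, Or.inl rfl⟩
          · exact Or.inl rfl
          · exact Or.inr ⟨f3 hx, Or.inr (hxF.2 (Or.inl hx))⟩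
          · exact Or.inr ⟨hxu, Or.inr (hxF.2 (Or.inr (Or.inl hx)))⟩
          · exact Or.inr ⟨f4 hx, Or.inr (hxF.2 (Or.inr (Or.inr hx)))⟩
        · rintro (rfl | ⟨hxu, (rfl | hx)⟩)
          · exact Or.inr (Or.inl (Or.inl rfl))
          · exact Or.inl rfl
          · rcases hxF.1 hx with h' | h' | h'
            · exact Or.inr (Or.inl (Or.inr h'))
            · exact Or.inr (Or.inr (Or.inl ⟨hxu, h'⟩))
            · exact Or.inr (Or.inr (Or.inr h'))
      have hm : F'.card * (S.card + 1) + minsize F' < n := by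
        have h1 : minsize F' ≤ (Δ.erase u).card :=
          minsize_le (Finset.mem_insert_of_mem (Finset.mem_insert_self _ _))
        have h2 : (Δ.erase u).card = Δ.card - 1 := Finset.card_erase_of_mem huΔ
        have hRcard : R.card = F.card - 2 := by
          rw [hRdef, Finset.card_erase_of_mem hΔeΓ, Finset.card_erase_of_mem hΓF]
          omega
        have h3 : F'.card ≤ F.card := by
          have ha := Finset.card_insert_le NP (insert (Δ.erase u) R)
          have hb := Finset.card_insert_le (Δ.erase u) R
          rw [← hF'def] at ha
          omega
        have h4 : F'.card * (S.card + 1) ≤ F.card * (S.card + 1) :=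
          Nat.mul_le_mul_right _ h3
        omega
      exact recurse F' u v hconn' hne' hdisj' hadj' hatt' hsub' hA'eq huA hvA hvS hins hm



lemma slide_out {S : Finset V} {s : V} (hS : IsConnSub G S) (hsS : s ∈ S)
    (hS' : IsConnSub G (S.erase s)) {A : Finset V} (hA : IsConnSub G A) (hAS : A ⊆ S)
    (hlt : A.card < S.card) :
    ∃ A', Reach G S A A' ∧ A' ⊆ S.erase s ∧ IsConnSub G A' ∧ A'.card = A.card := by
  by_cases hsA : s ∈ A
  · set F := comps' G (A.erase s) with hFdef
    have hsup : F.sup id = A.erase s := sup_comps_eq _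
    have hAins : insert s (F.sup id) = A := by rw [hsup, Finset.insert_erase hsA]
    have hcardA : 0 < A.card := Finset.card_pos.2 ⟨s, hsA⟩
    have hsub : F.sup id ⊆ S.erase s := by
      rw [hsup]
      exact Finset.erase_subset_erase s hAS
    have hcards : (F.sup id).card + 1 < S.card := by
      rw [hsup, Finset.card_erase_of_mem hsA]
      omega
    obtain ⟨A', hr, h1, h2, h3⟩ := SLrec (F.card * (S.card + 1) + minsize F) S s F hS hsS hS'
      (fun P hP => comps_cn hP) (fun P hP => comps_nonempty hP)
      (fun P hP Q hQ hne => comps_disjoint hP hQ hne)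
      (fun P hP Q hQ hne => comps_not_adj hP hQ hne)
      (fun P hP => comps_attach hA hsA hP) hsub hcards le_rfl
    rw [hAins] at hr
    refine ⟨A', hr, h1, h2, ?_⟩
    rw [h3, hsup, Finset.card_erase_of_mem hsA]
    omega
  · exact ⟨A, reach_refl, fun a ha => Finset.mem_erase.2 ⟨fun h => hsA (h ▸ ha), hAS ha⟩,
      hA, rfl⟩

lemma main_reach : ∀ (n : ℕ) (S : Finset V), S.card ≤ n → IsConnSub G S →
    ∀ A B : Finset V, A ⊆ S → B ⊆ S → IsConnSub G A → IsConnSub G B →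
    A.card = B.card → Reach G S A B := by
  intro n
  induction n with
  | zero =>
      intro S hSn hS A B hAS hBS hA hB hcard
      obtain ⟨a, ha⟩ := cn_nonempty hA
      have : 0 < S.card := Finset.card_pos.2 ⟨a, hAS ha⟩
      omega
  | succ n IHn =>
      intro S hSn hS A B hAS hBS hA hB hcard
      by_cases hAB : A = B
      · exact hAB ▸ reach_refl
      have hAne := cn_nonempty hA
      have hApos : 0 < A.card := Finset.card_pos.2 hAne
      have h1 : A.card < S.card := by
        rcases lt_or_eq_of_le (Finset.card_le_card hAS) with h | h
        · exact h
        · exfalso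
          have hA' : A = S := Finset.eq_of_subset_of_card_le hAS (le_of_eq h.symm)
          have hB' : B = S := Finset.eq_of_subset_of_card_le hBS (by omega)
          exact hAB (hA'.trans hB'.symm)
      have h2 : 2 ≤ S.card := by omega
      obtain ⟨x₀, hx₀⟩ : S.Nonempty := ⟨_, hAS hAne.choose_spec⟩
      obtain ⟨s, hsS, hsx, hS'⟩ := cn_erase_exists S.card S le_rfl h2 hS x₀ hx₀
      obtain ⟨A₁, hrA, hA₁sub, hA₁cn, hA₁card⟩ := slide_out hS hsS hS' hA hAS h1
      obtain ⟨B₁, hrB, hB₁sub, hB₁cn, hB₁card⟩ := slide_out hS hsS hS' hB hBS (by omega)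
      have hScard : (S.erase s).card ≤ n := by
        rw [Finset.card_erase_of_mem hsS]
        omega
      have hIH : Reach G (S.erase s) A₁ B₁ :=
        IHn (S.erase s) hScard hS' A₁ B₁ hA₁sub hB₁sub hA₁cn hB₁cn (by omega)
      exact reach_trans hrA (reach_trans (reach_mono (Finset.erase_subset _ _) hIH)
        (reach_symm hrB))



lemma reach_to_seq {S C D : Finset V} (h : Reach G S C D) :
    ∃ (ℓ : ℕ) (Wd : ℕ → Finset V), Wd 0 = C ∧ Wd ℓ = D ∧
      ∀ i < ℓ, Step G S (Wd i) (Wd (i + 1)) := by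
  induction h with
  | refl => exact ⟨0, fun _ => C, rfl, rfl, fun i hi => absurd hi (by omega)⟩
  | @tail b c hr hstep ih =>
      obtain ⟨ℓ, Wd, h0, hℓ, hstp⟩ := ih
      refine ⟨ℓ + 1, fun i => if i ≤ ℓ then Wd i else c, by simp [h0], by simp, ?_⟩
      intro i hi
      by_cases h2 : i + 1 ≤ ℓ
      · have h3 : i ≤ ℓ := by omega
        simp only [if_pos h3, if_pos h2]
        exact hstp i (by omega)
      · have h3 : i = ℓ := by omega
        subst h3
        simp only [if_pos (le_refl i), if_neg h2]
        exact hℓ ▸ hstep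

lemma reconf_refl {M : Multiset ℕ} {R : Finset V → Finset V → Prop} {A : Finset V}
    (h : ccMultiset G A = M) : Reconf G M R A A :=
  ⟨0, fun _ => A, rfl, rfl, fun _ _ => h, fun i hi => absurd hi (by omega)⟩

lemma reconf_trans {M : Multiset ℕ} {R : Finset V → Finset V → Prop} {A B C : Finset V}
    (h1 : Reconf G M R A B) (h2 : Reconf G M R B C) : Reconf G M R A C := by
  obtain ⟨ℓ₁, W₁, h10, h1ℓ, h1cc, h1s⟩ := h1
  obtain ⟨ℓ₂, W₂, h20, h2ℓ, h2cc, h2s⟩ := h2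
  refine ⟨ℓ₁ + ℓ₂, fun i => if i < ℓ₁ then W₁ i else W₂ (i - ℓ₁), ?_, ?_, ?_, ?_⟩
  · by_cases h : 0 < ℓ₁
    · simpa [h] using h10
    · have hℓ0 : ℓ₁ = 0 := by omega
      simp only [if_neg h, Nat.zero_sub]
      rw [h20, ← h1ℓ, hℓ0, h10]
  · have hno : ¬(ℓ₁ + ℓ₂ < ℓ₁) := by omega
    simp only [if_neg hno]
    rw [Nat.add_sub_cancel_left]
    exact h2ℓ
  · intro i hi
    by_cases h : i < ℓ₁
    · simpa [h] using h1cc i (by omega)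
    · simp only [if_neg h]
      exact h2cc (i - ℓ₁) (by omega)
  · intro i hi
    by_cases h : i + 1 < ℓ₁
    · have h' : i < ℓ₁ := by omega
      simp only [if_pos h, if_pos h']
      exact h1s i (by omega)
    · by_cases h' : i < ℓ₁
      · have hi1 : i + 1 = ℓ₁ := by omega
        simp only [if_pos h', if_neg h]
        have h0' : i + 1 - ℓ₁ = 0 := by omega
        rw [h0', h20, ← h1ℓ, ← hi1]
        exact h1s i (by omega)
      · simp only [if_neg h, if_neg h']
        have e1 : i - ℓ₁ + 1 = i + 1 - ℓ₁ := by omega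
        rw [← e1]
        exact h2s (i - ℓ₁) (by omega)

lemma part1 (U U' : Finset V) (h : adjCS G U U') :
    Reconf G (ccMultiset G U) (adjCS1 G) U U' := by
  obtain ⟨⟨hcc, hc1, hc2⟩, hcs⟩ := h
  obtain ⟨C, hCeq⟩ := Finset.card_eq_one.1 hc1
  obtain ⟨C', hC'eq⟩ := Finset.card_eq_one.1 hc2
  have hCmem : C ∈ comps G U ∧ C ∉ comps G U' :=
    Finset.mem_sdiff.1 (hCeq ▸ Finset.mem_singleton_self C)
  have hC'mem : C' ∈ comps G U' ∧ C' ∉ comps G U :=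
    Finset.mem_sdiff.1 (hC'eq ▸ Finset.mem_singleton_self C')
  set K := (comps G U).erase C with hK
  have hKsub' : ∀ P ∈ K, P ∈ comps G U' := by
    intro P hP
    obtain ⟨hPC, hPU⟩ := Finset.mem_erase.1 hP
    by_contra hno
    have : P ∈ comps G U \ comps G U' := Finset.mem_sdiff.2 ⟨hPU, hno⟩
    rw [hCeq] at this
    exact hPC (Finset.mem_singleton.1 this)
  have hUK : comps G U = insert C K := (Finset.insert_erase hCmem.1).symm
  have hCK : C ∉ K := Finset.notMem_erase _ _
  have hC'U : comps G U' = insert C' K := by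
    apply Finset.Subset.antisymm
    · intro Q hQ
      by_cases hQC' : Q = C'
      · exact hQC' ▸ Finset.mem_insert_self _ _
      · have hQU : Q ∈ comps G U := by
          by_contra hno
          have : Q ∈ comps G U' \ comps G U := Finset.mem_sdiff.2 ⟨hQ, hno⟩
          rw [hC'eq] at this
          exact hQC' (Finset.mem_singleton.1 this)
        have hQC : Q ≠ C := fun hh => hCmem.2 (hh ▸ hQ)
        exact Finset.mem_insert_of_mem (Finset.mem_erase.2 ⟨hQC, hQU⟩)
    · intro Q hQ
      rcases Finset.mem_insert.1 hQ with rfl | hQ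
      · exact hC'mem.1
      · exact hKsub' Q hQ
  have hC'K : C' ∉ K := fun hh => hC'mem.2 (Finset.mem_erase.1 hh).2
  have hccU : ccMultiset G U = C.card ::ₘ K.val.map Finset.card := by
    rw [ccMultiset, hUK, Finset.insert_val_of_notMem hCK, Multiset.map_cons]
  have hccU' : ccMultiset G U' = C'.card ::ₘ K.val.map Finset.card := by
    rw [ccMultiset, hC'U, Finset.insert_val_of_notMem hC'K, Multiset.map_cons]
  have hcards : C.card = C'.card := by
    have h' := hcc
    rw [hccU, hccU'] at h'
    exact (Multiset.cons_inj_left _).1 h'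
  have hCcn : IsConnSub G C := comps_cn (hCmem.1 : C ∈ comps' G U)
  have hC'cn : IsConnSub G C' := comps_cn (hC'mem.1 : C' ∈ comps' G U')
  have hScn : IsConnSub G (C ∪ C') :=
    hcs C (hCeq ▸ Finset.mem_singleton_self C) C' (hC'eq ▸ Finset.mem_singleton_self C')
  set S := C ∪ C' with hSdef
  have hreach : Reach G S C C' := main_reach S.card S le_rfl hScn C C'
    Finset.subset_union_left Finset.subset_union_right hCcn hC'cn hcards
  obtain ⟨ℓ, Wd, h0, hℓ, hstp⟩ := reach_to_seq hreach
  have hprop : ∀ i, i ≤ ℓ → IsConnSub G (Wd i) ∧ Wd i ⊆ S ∧ (Wd i).card = C.card := by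
    intro i
    induction i with
    | zero =>
        intro _
        rw [h0]
        exact ⟨hCcn, Finset.subset_union_left, rfl⟩
    | succ i ih =>
        intro hi
        have hstep := hstp i (by omega)
        exact ⟨hstep.2.2.2.1, hstep.2.1,
          (step_card hstep).symm.trans (ih (by omega)).2.2⟩
  have hKS : ∀ P ∈ K, Disjoint P S ∧ ∀ a ∈ P, ∀ b ∈ S, ¬G.Adj a b := by
    intro P hP
    have hPU : P ∈ comps G U := (Finset.mem_erase.1 hP).2
    have hPC : P ≠ C := (Finset.mem_erase.1 hP).1
    have hPU' : P ∈ comps G U' := hKsub' P hP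
    have hPC' : P ≠ C' := fun hh => hC'mem.2 (hh ▸ hPU)
    constructor
    · rw [Finset.disjoint_right]
      intro b hbS hbP
      rcases Finset.mem_union.1 hbS with hb | hb
      · exact (Finset.disjoint_left.1 (comps_disjoint hPU hCmem.1 hPC) hbP) hb
      · exact (Finset.disjoint_left.1 (comps_disjoint hPU' hC'mem.1 hPC') hbP) hb
    · intro a ha b hb
      rcases Finset.mem_union.1 hb with hb | hb
      · exact comps_not_adj hPU hCmem.1 hPC a ha b hb
      · exact comps_not_adj hPU' hC'mem.1 hPC' a ha b hb
  have key : ∀ D : Finset V, IsConnSub G D → D ⊆ S →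
      comps G ((insert D K).sup id) = insert D K ∧ D ∉ K := by
    intro D hD hDS
    obtain ⟨a0, ha0⟩ := cn_nonempty hD
    have hDK : D ∉ K := fun hmem =>
      (Finset.disjoint_left.1 (hKS D hmem).1 ha0) (hDS ha0)
    refine ⟨?_, hDK⟩
    refine comps_eq_of_parts ?_ ?_ ?_ ?_
    · intro P hP
      rcases Finset.mem_insert.1 hP with rfl | hP
      · exact hD
      · exact comps_cn ((Finset.mem_erase.1 hP).2 : P ∈ comps' G U)
    · intro P hP
      rcases Finset.mem_insert.1 hP with rfl | hP
      · exact ⟨a0, ha0⟩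
      · exact comps_nonempty ((Finset.mem_erase.1 hP).2 : P ∈ comps' G U)
    · intro P hP Q hQ hPQ
      rw [Finset.disjoint_left]
      intro x hxP hxQ
      rcases Finset.mem_insert.1 hP with hPD | hPK
      · rcases Finset.mem_insert.1 hQ with hQD | hQK
        · exact hPQ (hPD.trans hQD.symm)
        · exact (Finset.disjoint_left.1 (hKS Q hQK).1 hxQ) (hDS (hPD ▸ hxP))
      · rcases Finset.mem_insert.1 hQ with hQD | hQK
        · exact (Finset.disjoint_left.1 (hKS P hPK).1 hxP) (hDS (hQD ▸ hxQ))
        · exact (Finset.disjoint_left.1 (comps_disjoint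
            ((Finset.mem_erase.1 hPK).2 : P ∈ comps' G U)
            ((Finset.mem_erase.1 hQK).2 : Q ∈ comps' G U) hPQ) hxP) hxQ
    · intro P hP Q hQ hPQ a ha b hb hab
      rcases Finset.mem_insert.1 hP with hPD | hPK
      · rcases Finset.mem_insert.1 hQ with hQD | hQK
        · exact hPQ (hPD.trans hQD.symm)
        · exact (hKS Q hQK).2 b hb a (hDS (hPD ▸ ha)) hab.symm
      · rcases Finset.mem_insert.1 hQ with hQD | hQK
        · exact (hKS P hPK).2 a ha b (hDS (hQD ▸ hb)) hab
        · exact comps_not_adj ((Finset.mem_erase.1 hPK).2 : P ∈ comps' G U)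
            ((Finset.mem_erase.1 hQK).2 : Q ∈ comps' G U) hPQ a ha b hb hab
  set W : ℕ → Finset V := fun i => K.sup id ∪ Wd i with hWdef
  have hsupins : ∀ D : Finset V, (insert D K).sup id = K.sup id ∪ D := by
    intro D
    rw [Finset.sup_insert]
    exact Finset.union_comm _ _
  have hWcomps : ∀ i, i ≤ ℓ → comps G (W i) = insert (Wd i) K := by
    intro i hi
    obtain ⟨hcn, hsub, _⟩ := hprop i hi
    have h1 := (key (Wd i) hcn hsub).1
    rwa [hsupins] at h1
  have hUeq : U = K.sup id ∪ C := by
    have h1 : U = (insert C K).sup id := by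
      rw [← hUK]
      exact (sup_comps_eq U).symm
    rw [h1, hsupins]
  have hU'eq : U' = K.sup id ∪ C' := by
    have h1 : U' = (insert C' K).sup id := by
      rw [← hC'U]
      exact (sup_comps_eq U').symm
    rw [h1, hsupins]
  have hWcc : ∀ i, i ≤ ℓ → ccMultiset G (W i) = ccMultiset G U := by
    intro i hi
    obtain ⟨hcn, hsub, hcd⟩ := hprop i hi
    rw [ccMultiset, hWcomps i hi, Finset.insert_val_of_notMem (key (Wd i) hcn hsub).2,
      Multiset.map_cons, hccU, hcd]
  have hadjW : ∀ i, i < ℓ → adjCS1 G (W i) (W (i + 1)) := by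
    intro i hi
    have hstep := hstp i hi
    obtain ⟨hs1, hs2, hcn1, hcn2, hcnU, hd1, hd2⟩ := hstep
    have hne12 : Wd i ≠ Wd (i + 1) := by
      intro hh
      rw [hh, Finset.sdiff_self] at hd1
      simp at hd1
    have hci := hWcomps i (by omega)
    have hci1 := hWcomps (i + 1) (by omega)
    have hDKi := (key (Wd i) hcn1 hs1).2
    have hDKi1 := (key (Wd (i + 1)) hcn2 hs2).2
    have hdiff1 : comps G (W i) \ comps G (W (i + 1)) = {Wd i} := by
      rw [hci, hci1]
      ext P
      simp only [Finset.mem_sdiff, Finset.mem_insert, Finset.mem_singleton]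
      constructor
      · rintro ⟨rfl | hP, hno⟩
        · rfl
        · exact absurd (Or.inr hP) hno
      · rintro rfl
        refine ⟨Or.inl rfl, ?_⟩
        rintro (hh | hh)
        · exact hne12 hh
        · exact hDKi hh
    have hdiff2 : comps G (W (i + 1)) \ comps G (W i) = {Wd (i + 1)} := by
      rw [hci, hci1]
      ext P
      simp only [Finset.mem_sdiff, Finset.mem_insert, Finset.mem_singleton]
      constructor
      · rintro ⟨rfl | hP, hno⟩
        · rfl
        · exact absurd (Or.inr hP) hno
      · rintro rfl
        refine ⟨Or.inl rfl, ?_⟩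
        rintro (hh | hh)
        · exact hne12 hh.symm
        · exact hDKi1 hh
    refine ⟨⟨⟨(hWcc i (by omega)).trans (hWcc (i + 1) (by omega)).symm, ?_, ?_⟩, ?_⟩, ?_⟩
    · rw [hdiff1]; simp
    · rw [hdiff2]; simp
    · intro Ca hCa Cb hCb
      rw [hdiff1] at hCa
      rw [hdiff2] at hCb
      rw [Finset.mem_singleton.1 hCa, Finset.mem_singleton.1 hCb]
      exact hcnU
    · intro Ca hCa Cb hCb
      rw [hdiff1] at hCa
      rw [hdiff2] at hCb
      rw [Finset.mem_singleton.1 hCa, Finset.mem_singleton.1 hCb]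
      exact ⟨hd1, hd2⟩
  refine ⟨ℓ, W, ?_, ?_, fun i hi => hWcc i hi, fun i hi => hadjW i hi⟩
  · show K.sup id ∪ Wd 0 = U
    rw [h0, hUeq]
  · show K.sup id ∪ Wd ℓ = U'
    rw [hℓ, hU'eq]

end Slide

theorem stmt0' {V : Type*} [Fintype V] [DecidableEq V] (G : SimpleGraph V)
    (U U' : Finset V) (h : adjCS G U U') :
    Reconf G (ccMultiset G U) (adjCS1 G) U U' ∧
    (∀ (M : Multiset ℕ) (A B : Finset V),
      Reconf G M (adjCS G) A B ↔ Reconf G M (adjCS1 G) A B) := by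
  constructor
  · exact Slide.part1 U U' h
  · intro M A B
    constructor
    · rintro ⟨ℓ, W, h0, hℓ, hcc, hstp⟩
      have key : ∀ i, i ≤ ℓ → Reconf G M (adjCS1 G) A (W i) := by
        intro i
        induction i with
        | zero =>
            intro _
            rw [h0]
            exact Slide.reconf_refl (by rw [← h0]; exact hcc 0 (by omega))
        | succ i ih =>
            intro hi
            refine Slide.reconf_trans (ih (by omega)) ?_
            have hpart := Slide.part1 (W i) (W (i + 1)) (hstp i (by omega))
            rwa [hcc i (by omega)] at hpart
      have h' := key ℓ le_rfl
      rwa [hℓ] at h'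
    · rintro ⟨ℓ, W, h0, hℓ, hcc, hstp⟩
      exact ⟨ℓ, W, h0, hℓ, hcc, fun i hi => (hstp i hi).1⟩

/-- A single CS move can be simulated by a sequence of CS1 moves keeping
the CC-multiset; in particular reconfigurability under CS and CS1 coincide. -/
theorem stmt0 {V : Type*} [Fintype V] [DecidableEq V] (G : SimpleGraph V)
    (U U' : Finset V) (h : adjCS G U U') :
    Reconf G (ccMultiset G U) (adjCS1 G) U U' ∧
    (∀ (M : Multiset ℕ) (A B : Finset V),
      Reconf G M (adjCS G) A B ↔ Reconf G M (adjCS1 G) A B) := by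
  exact stmt0' G U U' h
end

section
/- Let G be a graph, M a multiset of positive integers, and A, B ⊆ V(G) with m(A) = m(B) = M. If A and B are reconfigurable under the component sliding rule CS, then A and B are reconfigurable under the component jumping rule CJ, and also A and B are reconfigurable under the token jumping rule TJ (where consecutive subsets U, U' satisfy |U \ U'| = |U' \ U| = 1), in both cases keeping every intermediate subset's CC-multiset equal to M. -/
open scoped Classical

set_option linter.unusedSectionVars false
set_option linter.unusedVariables false
set_option maxHeartbeats 1000000

noncomputable section

variable {V : Type*} [Fintype V] [DecidableEq V] {G : SimpleGraph V}

/-- Reachability within a finset. -/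
def RIn (G : SimpleGraph V) (S : Finset V) (a b : V) : Prop :=
  ∃ w : G.Walk a b, ∀ x ∈ w.support, x ∈ S

lemma RIn.mem_left {S : Finset V} {a b : V} (h : RIn G S a b) : a ∈ S := by
  obtain ⟨w, hw⟩ := h; exact hw a w.start_mem_support

lemma RIn.mem_right {S : Finset V} {a b : V} (h : RIn G S a b) : b ∈ S := by
  obtain ⟨w, hw⟩ := h; exact hw b w.end_mem_support

lemma RIn.refl {S : Finset V} {a : V} (ha : a ∈ S) : RIn G S a a :=
  ⟨SimpleGraph.Walk.nil, by simp [ha]⟩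

lemma RIn.symm {S : Finset V} {a b : V} (h : RIn G S a b) : RIn G S b a := by
  obtain ⟨w, hw⟩ := h
  exact ⟨w.reverse, by simpa using hw⟩

lemma RIn.trans {S : Finset V} {a b c : V} (h : RIn G S a b) (h' : RIn G S b c) :
    RIn G S a c := by
  obtain ⟨w, hw⟩ := h; obtain ⟨w', hw'⟩ := h'
  refine ⟨w.append w', fun x hx => ?_⟩
  rw [SimpleGraph.Walk.mem_support_append_iff] at hx
  exact hx.elim (hw x) (hw' x)

lemma RIn.mono {S T : Finset V} {a b : V} (hST : S ⊆ T) (h : RIn G S a b) : RIn G T a b := by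
  obtain ⟨w, hw⟩ := h; exact ⟨w, fun x hx => hST (hw x hx)⟩

lemma isConnSub_iff {S : Finset V} :
    IsConnSub G S ↔ S.Nonempty ∧ ∀ a ∈ S, ∀ b ∈ S, RIn G S a b := by
  rw [IsConnSub, SimpleGraph.connected_induce_iff,
    SimpleGraph.Subgraph.connected_iff_forall_exists_walk_subgraph]
  constructor
  · rintro ⟨⟨v, hv⟩, h⟩
    refine ⟨⟨v, by simpa using hv⟩, fun a ha b hb => ?_⟩
    obtain ⟨p, hp⟩ := h (by simpa using ha) (by simpa using hb)
    refine ⟨p, fun x hx => ?_⟩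
    have := hp.1
    simp only [SimpleGraph.Walk.verts_toSubgraph] at this
    simpa using this hx
  · rintro ⟨⟨v, hv⟩, h⟩
    refine ⟨⟨v, by simpa using hv⟩, fun {a b} ha hb => ?_⟩
    obtain ⟨p, hp⟩ := h a (by simpa using ha) b (by simpa using hb)
    refine ⟨p, ?_, ?_⟩
    · intro x hx
      simp only [SimpleGraph.Walk.verts_toSubgraph] at hx
      simpa using hp x hx
    · intro x y hxy
      have hadj := p.toSubgraph.adj_sub hxy
      have hx := p.toSubgraph.edge_vert hxy
      have hy := p.toSubgraph.edge_vert hxy.symm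
      simp only [SimpleGraph.Walk.verts_toSubgraph] at hx hy
      simp only [SimpleGraph.Subgraph.induce_adj]
      exact ⟨by simpa using hp x hx, by simpa using hp y hy, hadj⟩

lemma isConnSub_singleton (v : V) : IsConnSub G {v} := by
  rw [isConnSub_iff]
  exact ⟨⟨v, by simp⟩, by
    intro a ha b hb
    simp only [Finset.mem_singleton] at ha hb
    subst ha; subst hb; exact RIn.refl (by simp)⟩

lemma IsConnSub.nonempty {S : Finset V} (h : IsConnSub G S) : S.Nonempty :=
  (isConnSub_iff.1 h).1

/-- union of two connected sets touching (common vertex or edge) is connected -/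
lemma isConnSub_union {S T : Finset V} (hS : IsConnSub G S) (hT : IsConnSub G T)
    (h : ∃ x ∈ S, ∃ y ∈ T, x = y ∨ G.Adj x y) : IsConnSub G (S ∪ T) := by
  obtain ⟨x, hx, y, hy, hxy⟩ := h
  rw [isConnSub_iff] at hS hT ⊢
  have hxyR : RIn G (S ∪ T) x y := by
    rcases hxy with rfl | hadj
    · exact RIn.refl (by simp [hx])
    · exact ⟨hadj.toWalk, by intro z hz; simp at hz; rcases hz with rfl | rfl <;> simp [hx, hy]⟩
  refine ⟨⟨x, by simp [hx]⟩, fun a ha b hb => ?_⟩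
  simp only [Finset.mem_union] at ha hb
  have key : ∀ c, c ∈ S ∪ T → RIn G (S ∪ T) c x := by
    intro c hc
    simp only [Finset.mem_union] at hc
    rcases hc with hc | hc
    · exact (hS.2 c hc x hx).mono Finset.subset_union_left
    · exact ((hT.2 c hc y hy).mono Finset.subset_union_right).trans hxyR.symm
  exact (key a (by simp [ha])).trans (key b (by simp [hb])).symm

/-- crossing lemma: a walk starting in X and ending outside X has a crossing edge
within its support. -/
lemma exists_crossing {X : Finset V} :
    ∀ {a b : V} (w : G.Walk a b), a ∈ X → b ∉ X →
      ∃ p ∈ X, ∃ q ∉ X, p ∈ w.support ∧ q ∈ w.support ∧ G.Adj p q := by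
  intro a b w
  induction w with
  | nil => intro ha hb; exact absurd ha hb
  | @cons u v c h p ih =>
    intro ha hb
    by_cases hv : v ∈ X
    · obtain ⟨p', hp', q', hq', hps, hqs, hadj⟩ := ih hv hb
      exact ⟨p', hp', q', hq', by simp [hps], by simp [hqs], hadj⟩
    · exact ⟨u, ha, v, hv, by simp, by simp, h⟩


lemma mem_comps_iff {U C : Finset V} :
    C ∈ comps G U ↔ C ⊆ U ∧ IsConnSub G C ∧
      ∀ D : Finset V, C ⊆ D → D ⊆ U → IsConnSub G D → D = C := by
  simp [comps]

lemma comps_nonempty_mem {U C : Finset V} (h : C ∈ comps G U) : C.Nonempty :=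
  (mem_comps_iff.1 h).2.1.nonempty

/-- every vertex of U lies in some component -/
lemma exists_comp_mem {U : Finset V} {v : V} (hv : v ∈ U) : ∃ C ∈ comps G U, v ∈ C := by
  classical
  set F := Finset.univ.filter (fun D : Finset V => v ∈ D ∧ D ⊆ U ∧ IsConnSub G D) with hF
  have hne : F.Nonempty := ⟨{v}, by simp [hF, hv, isConnSub_singleton]⟩
  obtain ⟨C, hCF, hmax⟩ := F.exists_max_image Finset.card hne
  simp only [hF, Finset.mem_filter, Finset.mem_univ, true_and] at hCF
  refine ⟨C, ?_, hCF.1⟩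
  rw [mem_comps_iff]
  refine ⟨hCF.2.1, hCF.2.2, fun D hCD hDU hD => ?_⟩
  have hDF : D ∈ F := by simp [hF, hCD hCF.1, hDU, hD]
  exact (Finset.eq_of_subset_of_card_le hCD (hmax D hDF)).symm

/-- distinct components are disjoint -/
lemma comps_disjoint {U C₁ C₂ : Finset V} (h₁ : C₁ ∈ comps G U) (h₂ : C₂ ∈ comps G U)
    (hne : C₁ ≠ C₂) : Disjoint C₁ C₂ := by
  rw [mem_comps_iff] at h₁ h₂
  rw [Finset.disjoint_left]
  intro a ha₁ ha₂
  have hu : IsConnSub G (C₁ ∪ C₂) :=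
    isConnSub_union h₁.2.1 h₂.2.1 ⟨a, ha₁, a, ha₂, Or.inl rfl⟩
  have e₁ := h₁.2.2 (C₁ ∪ C₂) Finset.subset_union_left
    (Finset.union_subset h₁.1 h₂.1) hu
  have e₂ := h₂.2.2 (C₁ ∪ C₂) Finset.subset_union_right
    (Finset.union_subset h₁.1 h₂.1) hu
  exact hne (e₁.symm.trans e₂)

/-- a component is non-adjacent to the rest of U -/
lemma comp_not_adj {U C : Finset V} (hC : C ∈ comps G U) {x a : V} (hx : x ∈ C)
    (ha : a ∈ U) (haC : a ∉ C) : ¬ G.Adj x a := by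
  intro hadj
  rw [mem_comps_iff] at hC
  have hu : IsConnSub G (C ∪ {a}) :=
    isConnSub_union hC.2.1 (isConnSub_singleton a) ⟨x, hx, a, by simp, Or.inr hadj⟩
  have := hC.2.2 (C ∪ {a}) Finset.subset_union_left
    (Finset.union_subset hC.1 (by simp [ha])) hu
  exact haC (by rw [← this]; simp)

/-- key structural lemma: components of `A ∪ X` when `X` is isolated from `A`. -/
lemma comps_union_isolated {A X : Finset V} (hX : IsConnSub G X) (hdisj : Disjoint X A)
    (hnadj : ∀ x ∈ X, ∀ a ∈ A, ¬ G.Adj x a) :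
    comps G (A ∪ X) = insert X (comps G A) := by
  classical
  -- no RIn path can cross from X to A within A ∪ X
  have cross : ∀ {a b : V}, a ∈ X → b ∈ A → ¬ RIn G (A ∪ X) a b := by
    rintro a b ha hb ⟨w, hw⟩
    have hbX : b ∉ X := fun hbX => (Finset.disjoint_left.1 hdisj hbX) hb
    obtain ⟨p, hp, q, hq, hps, hqs, hadj⟩ := exists_crossing w ha hbX
    have hqA : q ∈ A := by
      have := hw q hqs; simp only [Finset.mem_union] at this; tauto
    exact hnadj p hp q hqA hadj
  -- any connected subset of A ∪ X lies in A or in X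
  have split : ∀ D : Finset V, D ⊆ A ∪ X → IsConnSub G D → D ⊆ A ∨ D ⊆ X := by
    intro D hDU hD
    by_cases hDA : D ⊆ A
    · exact Or.inl hDA
    · right
      obtain ⟨x, hxD, hxA⟩ := Finset.not_subset.1 hDA
      have hxX : x ∈ X := by
        have := hDU hxD; simp only [Finset.mem_union] at this; tauto
      intro y hyD
      by_contra hyX
      have hyA : y ∈ A := by
        have := hDU hyD; simp only [Finset.mem_union] at this; tauto
      have := (isConnSub_iff.1 hD).2 x hxD y hyD
      exact cross hxX hyA (this.mono hDU)
  ext C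
  simp only [Finset.mem_insert]
  constructor
  · intro hC
    rw [mem_comps_iff] at hC
    rcases split C hC.1 hC.2.1 with hCA | hCX
    · right
      rw [mem_comps_iff]
      exact ⟨hCA, hC.2.1, fun D hCD hDA hD =>
        hC.2.2 D hCD (hDA.trans Finset.subset_union_left) hD⟩
    · left
      exact (hC.2.2 X hCX Finset.subset_union_right hX).symm
  · rintro (rfl | hC)
    · rw [mem_comps_iff]
      refine ⟨Finset.subset_union_right, hX, fun D hXD hDU hD => ?_⟩
      rcases split D hDU hD with hDA | hDX
      · obtain ⟨x, hx⟩ := hX.nonempty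
        exact absurd (hDA (hXD hx)) (fun h => Finset.disjoint_left.1 hdisj hx h)
      · exact Finset.Subset.antisymm hDX hXD
    · rw [mem_comps_iff] at hC ⊢
      refine ⟨hC.1.trans Finset.subset_union_left, hC.2.1, fun D hCD hDU hD => ?_⟩
      rcases split D hDU hD with hDA | hDX
      · exact hC.2.2 D hCD hDA hD
      · obtain ⟨x, hx⟩ := hC.2.1.nonempty
        exact absurd (hDX (hCD hx)) (fun h => Finset.disjoint_left.1 hdisj h (hC.1 hx))


/-- distance within a finset -/
def dIn (G : SimpleGraph V) (S : Finset V) (a b : V) : ℕ :=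
  sInf {n | ∃ w : G.Walk a b, w.length = n ∧ ∀ x ∈ w.support, x ∈ S}

lemma dIn_exists {S : Finset V} {a b : V} (h : RIn G S a b) :
    ∃ w : G.Walk a b, w.length = dIn G S a b ∧ ∀ x ∈ w.support, x ∈ S := by
  obtain ⟨w, hw⟩ := h
  have hne : {n | ∃ w : G.Walk a b, w.length = n ∧ ∀ x ∈ w.support, x ∈ S}.Nonempty :=
    ⟨w.length, w, rfl, hw⟩
  exact Nat.sInf_mem hne

lemma dIn_le {S : Finset V} {a b : V} (w : G.Walk a b) (hw : ∀ x ∈ w.support, x ∈ S) :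
    dIn G S a b ≤ w.length :=
  Nat.sInf_le ⟨w, rfl, hw⟩

/-- THE removable-vertex lemma -/
lemma exists_removable {S Q : Finset V} (hS : IsConnSub G S) (hQ : IsConnSub G Q)
    (hQS : Q ⊆ S) (hne : Q ≠ S) :
    ∃ u ∈ S \ Q, IsConnSub G (S.erase u) := by
  obtain ⟨q0, hq0⟩ := hQ.nonempty
  have hSQ : (S \ Q).Nonempty := by
    obtain ⟨x, hx, hxQ⟩ := Finset.exists_of_ssubset (lt_of_le_of_ne hQS hne)
    exact ⟨x, Finset.mem_sdiff.2 ⟨hx, hxQ⟩⟩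
  obtain ⟨u, hu, hmax⟩ := (S \ Q).exists_max_image (dIn G S q0) hSQ
  have huS : u ∈ S := (Finset.mem_sdiff.1 hu).1
  have huQ : u ∉ Q := (Finset.mem_sdiff.1 hu).2
  refine ⟨u, hu, ?_⟩
  have hQE : Q ⊆ S.erase u := Finset.subset_erase.2 ⟨hQS, huQ⟩
  have key : ∀ x ∈ S.erase u, RIn G (S.erase u) x q0 := by
    intro x hx
    have hxS : x ∈ S := Finset.mem_of_mem_erase hx
    have hxu : x ≠ u := Finset.ne_of_mem_erase hx
    by_cases hxQ : x ∈ Q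
    · exact ((isConnSub_iff.1 hQ).2 x hxQ q0 hq0).mono hQE
    · have hxSQ : x ∈ S \ Q := Finset.mem_sdiff.2 ⟨hxS, hxQ⟩
      have hdx : dIn G S q0 x ≤ dIn G S q0 u := hmax x hxSQ
      obtain ⟨w, hwl, hws⟩ := dIn_exists ((isConnSub_iff.1 hS).2 q0 (hQS hq0) x hxS)
      have husup : u ∉ w.support := by
        intro husup
        have h1 : dIn G S q0 u ≤ (w.takeUntil u husup).length :=
          dIn_le _ (fun y hy => hws y (w.support_takeUntil_subset husup hy))
        have h2 : (w.takeUntil u husup).length + (w.dropUntil u husup).length = w.length := by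
          have := congrArg SimpleGraph.Walk.length (w.take_spec husup)
          rwa [SimpleGraph.Walk.length_append] at this
        have h3 : (w.dropUntil u husup).length ≠ 0 := by
          intro h0
          exact hxu (SimpleGraph.Walk.eq_of_length_eq_zero h0).symm
        omega
      refine RIn.symm ⟨w, fun y hy => Finset.mem_erase.2 ⟨?_, hws y hy⟩⟩
      intro hyu; subst hyu; exact husup hy
  rw [isConnSub_iff]
  refine ⟨⟨q0, hQE hq0⟩, fun a ha b hb => ?_⟩
  exact (key a ha).trans (key b hb).symm

/-- growth: can extend a proper connected subset by an adjacent vertex -/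
lemma exists_growth {W X : Finset V} (hW : IsConnSub G W) (hX : X.Nonempty)
    (hXW : X ⊆ W) (hne : X ≠ W) :
    ∃ v ∈ W, v ∉ X ∧ ∃ p ∈ X, G.Adj p v := by
  obtain ⟨x, hx⟩ := hX
  obtain ⟨b, hbW, hbX⟩ := Finset.exists_of_ssubset (lt_of_le_of_ne hXW hne)
  obtain ⟨w, hw⟩ := (isConnSub_iff.1 hW).2 x (hXW hx) b hbW
  obtain ⟨p, hp, q, hq, _, hqs, hadj⟩ := exists_crossing w hx hbX
  exact ⟨q, hw q hqs, hq, p, hp, hadj⟩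

/-- existence of a connected enumeration of W -/
lemma exists_conn_order {W : Finset V} (hW : IsConnSub G W) :
    ∃ l : List V, l.Nodup ∧ l.toFinset = W ∧
      (∀ k, 0 < k → IsConnSub G (l.take k).toFinset) ∧
      (∀ k (hk : k < l.length), 0 < k → ∃ p ∈ (l.take k).toFinset, G.Adj p l[k]) := by
  obtain ⟨w0, hw0⟩ := hW.nonempty
  have main : ∀ j, 1 ≤ j → j ≤ W.card → ∃ l : List V, l.Nodup ∧ l.length = j ∧
      l.toFinset ⊆ W ∧ (∀ k, 0 < k → IsConnSub G (l.take k).toFinset) ∧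
      (∀ k (hk : k < l.length), 0 < k → ∃ p ∈ (l.take k).toFinset, G.Adj p l[k]) := by
    intro j
    induction j with
    | zero => omega
    | succ j ih =>
      intro _ hj
      by_cases hj1 : j = 0
      · subst hj1
        refine ⟨[w0], by simp, by simp, by simp [hw0], ?_, ?_⟩
        · intro k hk
          have : (List.take k [w0]).toFinset = {w0} := by
            match k, hk with
            | (k+1), _ => simp
          rw [this]; exact isConnSub_singleton w0
        · intro k hk hk0; simp at hk; omega
      · obtain ⟨l, hnd, hlen, hsub, hpref, hatt⟩ := ih (by omega) (by omega)
        have hXconn : IsConnSub G l.toFinset := by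
          have := hpref l.length (by omega)
          rwa [List.take_length] at this
        have hcard : l.toFinset.card = j := by rw [List.card_toFinset, hnd.dedup, hlen]
        have hXne : l.toFinset ≠ W := by
          intro h; rw [h] at hcard; omega
        obtain ⟨v, hvW, hvX, p, hpX, hadj⟩ := exists_growth hW hXconn.nonempty hsub hXne
        have hvl : v ∉ l := by simpa using hvX
        refine ⟨l ++ [v], ?_, by simp [hlen], ?_, ?_, ?_⟩
        · simp only [List.nodup_append]
          exact ⟨hnd, by simp, by intro a ha b hb hab; simp only [List.mem_singleton] at hb; subst hb; subst hab; exact hvl ha⟩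
        · simp only [List.toFinset_append, List.toFinset_cons, List.toFinset_nil]
          intro x hx
          simp only [Finset.mem_union, Finset.mem_insert, Finset.mem_singleton] at hx
          rcases hx with hx | hx
          · exact hsub hx
          · simp at hx; subst hx; exact hvW
        · intro k hk
          by_cases hkj : k ≤ j
          · rw [List.take_append_of_le_length (by omega)]
            exact hpref k hk
          · rw [List.take_of_length_le (by simp [hlen]; omega)]
            have : (l ++ [v]).toFinset = l.toFinset ∪ {v} := by simp
            rw [this]
            exact isConnSub_union hXconn (isConnSub_singleton v) ⟨p, hpX, v, by simp, Or.inr hadj⟩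
        · intro k hk hk0
          simp only [List.length_append, List.length_singleton, hlen] at hk
          by_cases hkj : k < j
          · rw [List.take_append_of_le_length (by omega)]
            have hget : (l ++ [v])[k] = l[k]'(by omega) := List.getElem_append_left (by omega)
            rw [hget]
            exact hatt k (by omega) hk0
          · have hkeq : k = j := by omega
            subst hkeq
            have hget : (l ++ [v])[k] = v := by
              have : k = l.length := hlen.symm
              subst this
              exact List.getElem_concat_length rfl (by simp)
            rw [List.take_append_of_le_length (by omega), hget,
              List.take_of_length_le (by omega)]
            exact ⟨p, hpX, hadj⟩
  have hWc : 1 ≤ W.card := Finset.card_pos.2 hW.nonempty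
  obtain ⟨l, hnd, hlen, hsub, hpref, hatt⟩ := main W.card hWc le_rfl
  have : l.toFinset = W := by
    apply Finset.eq_of_subset_of_card_le hsub
    rw [List.card_toFinset, hnd.dedup, hlen]
  exact ⟨l, hnd, this, hpref, hatt⟩


/-- list helpers -/
lemma getElem_mem_take {l : List V} {j k : ℕ} (hj : j < k) (hjl : j < l.length) :
    l[j] ∈ l.take k := by
  have h1 : (l.take k)[j]? = l[j]? := List.getElem?_take_of_lt hj
  have h2 : l[j]? = some l[j] := List.getElem?_eq_getElem hjl
  exact List.mem_of_getElem? (h1.trans h2)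

lemma mem_take_getElem {l : List V} {k : ℕ} {x : V} (h : x ∈ l.take k) :
    ∃ j, ∃ (hj : j < l.length), j < k ∧ l[j] = x := by
  obtain ⟨j, hj, hjx⟩ := List.mem_iff_getElem.1 h
  have hj2 : j < min k l.length := by rwa [List.length_take] at hj
  have hjk : j < k := lt_of_lt_of_le hj2 (min_le_left _ _)
  have hjl : j < l.length := lt_of_lt_of_le hj2 (min_le_right _ _)
  refine ⟨j, hjl, hjk, ?_⟩
  have h1 : (l.take k)[j]? = l[j]? := List.getElem?_take_of_lt hjk
  have h2 : (l.take k)[j]? = some x := by rw [List.getElem?_eq_getElem hj, hjx]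
  have := h1.symm.trans h2
  rw [List.getElem?_eq_getElem hjl] at this
  exact Option.some_injective _ this

/-- swap facts -/
lemma swap_facts {S : Finset V} {u v : V} (hu : u ∈ S) (hv : v ∉ S) :
    (insert v (S.erase u)).card = S.card ∧ S \ insert v (S.erase u) = {u} ∧
      insert v (S.erase u) \ S = {v} := by
  have hvu : v ≠ u := fun h => hv (h ▸ hu)
  have hvE : v ∉ S.erase u := fun h => hv (Finset.mem_of_mem_erase h)
  refine ⟨?_, ?_, ?_⟩
  · rw [Finset.card_insert_of_notMem hvE, Finset.card_erase_of_mem hu]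
    have : 1 ≤ S.card := Finset.card_pos.2 ⟨u, hu⟩
    omega
  · ext x
    simp only [Finset.mem_sdiff, Finset.mem_insert, Finset.mem_erase, Finset.mem_singleton]
    constructor
    · rintro ⟨hxS, hx⟩
      push_neg at hx
      exact by_contra fun hxu => (hx.2 hxu) hxS
    · rintro rfl
      exact ⟨hu, by push_neg; exact ⟨hvu.symm, fun h => absurd rfl h⟩⟩
  · ext x
    simp only [Finset.mem_sdiff, Finset.mem_insert, Finset.mem_erase, Finset.mem_singleton]
    constructor
    · rintro ⟨hx | ⟨_, hxS⟩, hxnS⟩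
      · exact hx
      · exact absurd hxS hxnS
    · rintro rfl
      exact ⟨Or.inl rfl, hv⟩

section Canon

variable {W : Finset V} {l : List V}

/-- potential functions -/
def Phi (l : List V) (S : Finset V) : ℕ := ∑ v ∈ S, l.idxOf v

def Dv (G : SimpleGraph V) (W : Finset V) (v1 : V) (S : Finset V) : ℕ :=
  sInf {d | ∃ s ∈ S, dIn G W v1 s = d}

def mu (G : SimpleGraph V) (W : Finset V) (l : List V) (v1 : V) (S : Finset V) : ℕ :=
  Dv G W v1 S * (l.length * l.length + 1) + Phi l S

lemma Dv_le {v1 : V} {S : Finset V} {s : V} (hs : s ∈ S) : Dv G W v1 S ≤ dIn G W v1 s :=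
  Nat.sInf_le ⟨s, hs, rfl⟩

lemma Dv_mem {v1 : V} {S : Finset V} (hS : S.Nonempty) :
    ∃ s ∈ S, dIn G W v1 s = Dv G W v1 S := by
  obtain ⟨s, hs⟩ := hS
  exact Nat.sInf_mem (⟨dIn G W v1 s, s, hs, rfl⟩ : {d | ∃ s ∈ S, dIn G W v1 s = d}.Nonempty)

lemma dIn_self {v1 : V} (h : v1 ∈ W) : dIn G W v1 v1 = 0 :=
  Nat.le_zero.1 (dIn_le SimpleGraph.Walk.nil (by simp [h]))

lemma Dv_zero {v1 : V} {S : Finset V} (hv1W : v1 ∈ W) (h : v1 ∈ S) : Dv G W v1 S = 0 :=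
  Nat.le_zero.1 (dIn_self hv1W ▸ Dv_le h)

lemma Phi_le {S : Finset V} (hnd : l.Nodup) (hlW : l.toFinset = W) (hSW : S ⊆ W) :
    Phi l S ≤ l.length * l.length := by
  have h1 : ∀ v ∈ S, l.idxOf v ≤ l.length := fun v hv => le_of_lt (by
    rw [List.idxOf_lt_length_iff]
    have : v ∈ W := hSW hv
    rwa [← hlW, List.mem_toFinset] at this)
  calc Phi l S ≤ S.card * l.length := by
        simpa [Phi] using Finset.sum_le_card_nsmul S _ l.length h1
    _ ≤ l.length * l.length := by
        have : S.card ≤ l.length := by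
          have := Finset.card_le_card hSW
          rw [← hlW, List.card_toFinset, hnd.dedup] at this
          exact this
        exact Nat.mul_le_mul_right _ this


lemma step_lemma (hW : IsConnSub G W) (hnd : l.Nodup) (hlW : l.toFinset = W)
    (hpref : ∀ k, 0 < k → IsConnSub G (l.take k).toFinset)
    (hatt : ∀ k (hk : k < l.length), 0 < k → ∃ p ∈ (l.take k).toFinset, G.Adj p l[k])
    {S : Finset V} {n : ℕ} (hn : 0 < n) (hN : 0 < l.length)
    (hSW : S ⊆ W) (hSc : IsConnSub G S) (hcard : S.card = n)
    (hne : S ≠ (l.take n).toFinset) :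
    ∃ S', S' ⊆ W ∧ IsConnSub G S' ∧ S'.card = n ∧ (S \ S').card = 1 ∧ (S' \ S).card = 1 ∧
      mu G W l (l[0]'hN) S' < mu G W l (l[0]'hN) S := by
  set N := l.length with hNdef
  set v1 := l[0]'hN with hv1def
  set K := N * N + 1 with hKdef
  have hv1W : v1 ∈ W := by
    rw [← hlW, List.mem_toFinset]; exact List.getElem_mem hN
  have hSne : S.Nonempty := Finset.card_pos.1 (hcard ▸ hn)
  by_cases hv1S : v1 ∈ S
  · -- Case B : v1 ∈ S, use the canonical ordering potential Phi
    have hex : ∃ k, ∃ (h : k < l.length), l[k] ∉ S := by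
      by_contra hc
      push_neg at hc
      have hWS : W ⊆ S := by
        intro x hx
        rw [← hlW, List.mem_toFinset, List.mem_iff_getElem] at hx
        obtain ⟨k, hk, rfl⟩ := hx
        exact hc k hk
      have hSW' : S = W := Finset.Subset.antisymm hSW hWS
      have hnN : n = N := by
        rw [← hcard, hSW', ← hlW, List.card_toFinset, hnd.dedup]
      apply hne
      rw [hSW', ← hlW, hnN, List.take_length]
    set i := Nat.find hex with hidef
    obtain ⟨hiN, hviS⟩ := Nat.find_spec hex
    simp only [← hidef] at hiN hviS
    have hmin : ∀ k, k < i → (hk : k < l.length) → l[k] ∈ S := by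
      intro k hk hkN
      by_contra hkS
      exact Nat.find_min hex hk ⟨hkN, hkS⟩
    have hi0 : 0 < i := by
      rcases Nat.eq_zero_or_pos i with h0 | h
      · exfalso
        apply hviS
        have : l[i]'hiN = l[0]'hN := by congr 1
        rw [this]
        exact hv1S
      · exact h
    set Q := (l.take i).toFinset with hQdef
    have hQconn : IsConnSub G Q := hpref i hi0
    have hQS : Q ⊆ S := by
      intro x hx
      rw [hQdef, List.mem_toFinset] at hx
      obtain ⟨j, hjl, hji, rfl⟩ := mem_take_getElem hx
      exact hmin j hji hjl
    have hQne : Q ≠ S := by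
      intro hQeq
      have hcardQ : Q.card = i := by
        rw [hQdef, List.card_toFinset, ((l.take_sublist i).nodup hnd).dedup,
          List.length_take]
        omega
      have hin : i = n := by rw [← hcard, ← hQeq, hcardQ]
      exact hne (by rw [← hQeq, hQdef, hin])
    obtain ⟨u, huSQ, hEconn⟩ := exists_removable hSc hQconn hQS hQne
    have huS : u ∈ S := (Finset.mem_sdiff.1 huSQ).1
    have huQ : u ∉ Q := (Finset.mem_sdiff.1 huSQ).2
    obtain ⟨p, hpQ, hpadj⟩ := hatt i hiN hi0
    set v := l[i]'hiN with hvdef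
    have hvS : v ∉ S := hviS
    set S' := insert v (S.erase u) with hS'def
    obtain ⟨hcard', hsd1, hsd2⟩ := swap_facts huS hvS
    have hpE : p ∈ S.erase u := Finset.mem_erase.2 ⟨fun h => huQ (h ▸ hpQ), hQS hpQ⟩
    have hconn' : IsConnSub G S' := by
      have := isConnSub_union hEconn (isConnSub_singleton v)
        ⟨p, hpE, v, Finset.mem_singleton_self v, Or.inr hpadj⟩
      rwa [Finset.union_comm, ← Finset.insert_eq] at this
    have hS'W : S' ⊆ W := by
      intro x hx
      rcases Finset.mem_insert.1 hx with rfl | hx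
      · rw [← hlW, List.mem_toFinset]; exact List.getElem_mem hiN
      · exact hSW (Finset.mem_of_mem_erase hx)
    refine ⟨S', hS'W, hconn', by rw [hcard', hcard], by rw [hsd1]; simp,
      by rw [hsd2]; simp, ?_⟩
    -- potential decreases
    have hv1Q : v1 ∈ Q := by
      rw [hQdef, List.mem_toFinset]; exact getElem_mem_take hi0 hN
    have hv1S' : v1 ∈ S' :=
      Finset.mem_insert.2 (Or.inr (Finset.mem_erase.2 ⟨fun h => huQ (h ▸ hv1Q), hv1S⟩))
    have hD0 : Dv G W v1 S = 0 := Dv_zero hv1W hv1S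
    have hD0' : Dv G W v1 S' = 0 := Dv_zero hv1W hv1S'
    have hvE : v ∉ S.erase u := fun h => hvS (Finset.mem_of_mem_erase h)
    have hPhiS : Phi l S = Phi l (S.erase u) + l.idxOf u :=
      (Finset.sum_erase_add S _ huS).symm
    have hPhiS' : Phi l S' = Phi l (S.erase u) + l.idxOf v := by
      rw [hS'def, Phi, Finset.sum_insert hvE, add_comm]; rfl
    have hidxv : l.idxOf v = i := List.Nodup.idxOf_getElem hnd i hiN
    have hul : u ∈ l := by
      rw [← List.mem_toFinset, hlW]; exact hSW huS
    have hidxu : i < l.idxOf u := by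
      have hjN : l.idxOf u < l.length := List.idxOf_lt_length_iff.2 hul
      have hju : l[l.idxOf u]'hjN = u := List.getElem_idxOf hjN
      rcases lt_trichotomy (l.idxOf u) i with hji | hji | hji
      · exfalso
        apply huQ
        rw [hQdef, List.mem_toFinset, ← hju]
        exact getElem_mem_take hji hjN
      · exfalso
        have hvN : List.idxOf v l < l.length := by rw [hidxv]; exact hiN
        have heq : List.idxOf u l = List.idxOf v l := by omega
        have huv : u = v := by
          rw [← hju]; simp only [heq]
          exact List.getElem_idxOf hvN
        exact hvS (huv ▸ huS)
      · exact hji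
    rw [mu, mu, hD0, hD0', hPhiS, hPhiS', hidxv]
    simp only [zero_mul, zero_add]
    omega
  · -- Case A : v1 ∉ S, move towards v1
    obtain ⟨s, hsS, hsd⟩ := Dv_mem (W := W) (v1 := v1) hSne
    set m := Dv G W v1 S with hmdef
    have hRIn : RIn G W v1 s := (isConnSub_iff.1 hW).2 v1 hv1W s (hSW hsS)
    obtain ⟨w, hwl, hws⟩ := dIn_exists hRIn
    rw [hsd] at hwl
    have hm0 : m ≠ 0 := by
      intro h0
      rw [h0] at hwl
      exact hv1S ((SimpleGraph.Walk.eq_of_length_eq_zero hwl) ▸ hsS)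
    have hsv1 : s ≠ v1 := fun h => hv1S (h ▸ hsS)
    obtain ⟨y, hadj, q, hq⟩ := SimpleGraph.Walk.exists_eq_cons_of_ne hsv1 w.reverse
    have hqsup : ∀ x ∈ q.support, x ∈ W := by
      intro x hx
      apply hws
      have : x ∈ w.reverse.support := by rw [hq, SimpleGraph.Walk.support_cons]; simp [hx]
      rwa [SimpleGraph.Walk.support_reverse, List.mem_reverse] at this
    have hql : q.length = m - 1 := by
      have := congrArg SimpleGraph.Walk.length hq
      rw [SimpleGraph.Walk.length_reverse, hwl, SimpleGraph.Walk.length_cons] at this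
      omega
    have hyW : y ∈ W := hqsup y q.start_mem_support
    have hdy : dIn G W v1 y ≤ m - 1 := by
      have := dIn_le q.reverse (by
        intro x hx
        rw [SimpleGraph.Walk.support_reverse, List.mem_reverse] at hx
        exact hqsup x hx)
      rwa [SimpleGraph.Walk.length_reverse, hql] at this
    have hyS : y ∉ S := by
      intro hyS
      have := Dv_le (G := G) (W := W) (v1 := v1) hyS
      rw [← hmdef] at this
      omega
    -- choose the vertex u to remove
    have key : ∃ u ∈ S, (S.erase u).Nonempty → IsConnSub G (S.erase u) ∧ s ∈ S.erase u := by
      by_cases hS1 : S = {s}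
      · exact ⟨s, hsS, fun hne' => by
          exfalso; rw [hS1] at hne'; simp at hne'⟩
      · obtain ⟨u, huSQ, hEconn⟩ :=
          exists_removable hSc (isConnSub_singleton s) (Finset.singleton_subset_iff.2 hsS)
            (fun h => hS1 h.symm)
        have huS : u ∈ S := (Finset.mem_sdiff.1 huSQ).1
        have hus : u ≠ s := by
          have := (Finset.mem_sdiff.1 huSQ).2; simpa using this
        exact ⟨u, huS, fun _ => ⟨hEconn, Finset.mem_erase.2 ⟨hus.symm, hsS⟩⟩⟩
    obtain ⟨u, huS, hkey⟩ := key
    set S' := insert y (S.erase u) with hS'def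
    obtain ⟨hcard', hsd1, hsd2⟩ := swap_facts huS hyS
    have hconn' : IsConnSub G S' := by
      rcases Finset.eq_empty_or_nonempty (S.erase u) with hE | hE
      · rw [hS'def, hE]
        exact isConnSub_singleton y
      · obtain ⟨hEconn, hsE⟩ := hkey hE
        have := isConnSub_union hEconn (isConnSub_singleton y)
          ⟨s, hsE, y, Finset.mem_singleton_self y, Or.inr hadj⟩
        rwa [Finset.union_comm, ← Finset.insert_eq] at this
    have hS'W : S' ⊆ W := by
      intro x hx
      rcases Finset.mem_insert.1 hx with rfl | hx
      · exact hyW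
      · exact hSW (Finset.mem_of_mem_erase hx)
    refine ⟨S', hS'W, hconn', by rw [hcard', hcard], by rw [hsd1]; simp,
      by rw [hsd2]; simp, ?_⟩
    have hyS' : y ∈ S' := Finset.mem_insert_self y _
    have hDv' : Dv G W v1 S' ≤ m - 1 := le_trans (Dv_le hyS') hdy
    have hPhi' : Phi l S' ≤ N * N := Phi_le hnd hlW hS'W
    have h1 : mu G W l v1 S' ≤ (m - 1) * K + N * N :=
      add_le_add (Nat.mul_le_mul_right K hDv') hPhi'
    have h2 : (m - 1) * K + N * N < m * K := by
      have : (m - 1) * K + K = m * K := by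
        have hm1 : m - 1 + 1 = m := Nat.succ_pred_eq_of_pos (Nat.pos_of_ne_zero hm0)
        calc (m - 1) * K + K = (m - 1 + 1) * K := (Nat.succ_mul _ _).symm
          _ = m * K := by rw [hm1]
      omega
    have h3 : m * K ≤ mu G W l v1 S := Nat.le_add_right _ _
    omega

end Canon


/-- chains of connected n-subsets of W under single-vertex exchanges -/
def ChainTJC (G : SimpleGraph V) (Wl : Finset V) (n : ℕ) (S T : Finset V) : Prop :=
  ∃ ℓ, ∃ c : ℕ → Finset V, c 0 = S ∧ c ℓ = T ∧
    (∀ i ≤ ℓ, c i ⊆ Wl ∧ IsConnSub G (c i) ∧ (c i).card = n) ∧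
    ∀ i < ℓ, (c i \ c (i + 1)).card = 1 ∧ (c (i + 1) \ c i).card = 1

lemma ChainTJC.refl {Wl S : Finset V} {n : ℕ} (h1 : S ⊆ Wl) (h2 : IsConnSub G S)
    (h3 : S.card = n) : ChainTJC G Wl n S S :=
  ⟨0, fun _ => S, rfl, rfl, fun _ _ => ⟨h1, h2, h3⟩, fun i hi => absurd hi (by omega)⟩

lemma ChainTJC.single {Wl S S' : Finset V} {n : ℕ} (h1 : S ⊆ Wl) (h2 : IsConnSub G S)
    (h3 : S.card = n) (h1' : S' ⊆ Wl) (h2' : IsConnSub G S') (h3' : S'.card = n)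
    (hd1 : (S \ S').card = 1) (hd2 : (S' \ S).card = 1) : ChainTJC G Wl n S S' := by
  refine ⟨1, fun i => if i = 0 then S else S', by simp, by simp, ?_, ?_⟩
  · intro i _
    by_cases h : i = 0 <;> simp [h, h1, h2, h3, h1', h2', h3']
  · intro i hi
    have : i = 0 := by omega
    subst this
    simpa using ⟨hd1, hd2⟩

lemma ChainTJC.trans {Wl S T U : Finset V} {n : ℕ} (h1 : ChainTJC G Wl n S T)
    (h2 : ChainTJC G Wl n T U) : ChainTJC G Wl n S U := by
  obtain ⟨ℓ1, c1, hc10, hc1e, hc1m, hc1s⟩ := h1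
  obtain ⟨ℓ2, c2, hc20, hc2e, hc2m, hc2s⟩ := h2
  refine ⟨ℓ1 + ℓ2, fun i => if i ≤ ℓ1 then c1 i else c2 (i - ℓ1), by simp [hc10], ?_, ?_, ?_⟩
  · by_cases h : ℓ2 = 0
    · subst h; simp [hc1e, ← hc2e, ← hc20]
    · have : ¬ (ℓ1 + ℓ2 ≤ ℓ1) := by omega
      simp [this, hc2e]
  · intro i hi
    by_cases h : i ≤ ℓ1
    · simp only [h, if_pos]; exact hc1m i h
    · simp only [h, if_neg, if_false]
      exact hc2m (i - ℓ1) (by omega)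
  · intro i hi
    by_cases h : i + 1 ≤ ℓ1
    · have h' : i ≤ ℓ1 := by omega
      simp only [h, h', if_pos]
      exact hc1s i (by omega)
    · by_cases h' : i ≤ ℓ1
      · have hieq : i = ℓ1 := by omega
        subst hieq
        have e1 : c1 i = c2 0 := by rw [hc1e, hc20]
        simp only [h, h', if_pos, if_neg, if_false]
        rw [e1]
        have : i + 1 - i = 1 := by omega
        rw [this]
        exact hc2s 0 (by omega)
      · simp only [h, h', if_neg, if_false]
        have : i + 1 - ℓ1 = (i - ℓ1) + 1 := by omega
        rw [this]
        exact hc2s (i - ℓ1) (by omega)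

lemma ChainTJC.symm {Wl S T : Finset V} {n : ℕ} (h : ChainTJC G Wl n S T) :
    ChainTJC G Wl n T S := by
  obtain ⟨ℓ, c, hc0, hce, hcm, hcs⟩ := h
  refine ⟨ℓ, fun i => c (ℓ - i), by simp [hce], by simp [hc0], ?_, ?_⟩
  · intro i _
    exact hcm (ℓ - i) (by omega)
  · intro i hi
    have h1 : ℓ - i = (ℓ - (i + 1)) + 1 := by omega
    simp only []
    rw [h1]
    exact ⟨(hcs (ℓ - (i + 1)) (by omega)).2, (hcs (ℓ - (i + 1)) (by omega)).1⟩

/-- every connected n-subset reaches the canonical prefix set -/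
lemma reach_canonical {W : Finset V} {l : List V} (hW : IsConnSub G W) (hnd : l.Nodup)
    (hlW : l.toFinset = W)
    (hpref : ∀ k, 0 < k → IsConnSub G (l.take k).toFinset)
    (hatt : ∀ k (hk : k < l.length), 0 < k → ∃ p ∈ (l.take k).toFinset, G.Adj p l[k])
    {n : ℕ} (hn : 0 < n) (hN : 0 < l.length) :
    ∀ m S, S ⊆ W → IsConnSub G S → S.card = n → mu G W l (l[0]'hN) S ≤ m →
      ChainTJC G W n S ((l.take n).toFinset) := by
  intro m
  induction m with
  | zero =>
    intro S hSW hSc hcard hmu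
    by_cases heq : S = (l.take n).toFinset
    · rw [← heq]; exact ChainTJC.refl hSW hSc hcard
    · obtain ⟨S', _, _, _, _, _, hlt⟩ :=
        step_lemma hW hnd hlW hpref hatt hn hN hSW hSc hcard heq
      omega
  | succ m ih =>
    intro S hSW hSc hcard hmu
    by_cases heq : S = (l.take n).toFinset
    · rw [← heq]; exact ChainTJC.refl hSW hSc hcard
    · obtain ⟨S', hS'W, hS'c, hS'card, hd1, hd2, hlt⟩ :=
        step_lemma hW hnd hlW hpref hatt hn hN hSW hSc hcard heq
      exact ChainTJC.trans
        (ChainTJC.single hSW hSc hcard hS'W hS'c hS'card hd1 hd2)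
        (ih S' hS'W hS'c hS'card (by omega))

/-- main part B lemma: any two connected equal-size subsets of a connected W
are connected by a chain -/
lemma chain_between {W S T : Finset V} (hW : IsConnSub G W) (hS : IsConnSub G S)
    (hT : IsConnSub G T) (hSW : S ⊆ W) (hTW : T ⊆ W) (hcard : S.card = T.card) :
    ChainTJC G W S.card S T := by
  obtain ⟨l, hnd, hlW, hpref, hatt⟩ := exists_conn_order hW
  have hn : 0 < S.card := Finset.card_pos.2 hS.nonempty
  have hN : 0 < l.length := by
    obtain ⟨w, hw⟩ := hW.nonempty
    rw [← hlW, List.mem_toFinset] at hw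
    exact List.length_pos_iff.2 (fun h => by simp [h] at hw)
  have h1 := reach_canonical hW hnd hlW hpref hatt hn hN (mu G W l (l[0]'hN) S) S
    hSW hS rfl le_rfl
  have h2 := reach_canonical hW hnd hlW hpref hatt hn hN (mu G W l (l[0]'hN) T) T
    hTW hT hcard.symm le_rfl
  exact ChainTJC.trans h1 h2.symm


/-- multiset cons cancellation -/
lemma cons_cancel {a b : ℕ} {m : Multiset ℕ} (h : a ::ₘ m = b ::ₘ m) : a = b := by
  by_contra hab
  have := congrArg (Multiset.count a) h
  rw [Multiset.count_cons_self, Multiset.count_cons_of_ne hab] at this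
  omega

/-- Reconf combinators -/
lemma reconf_refl {M : Multiset ℕ} {R : Finset V → Finset V → Prop} {A : Finset V}
    (hM : ccMultiset G A = M) : Reconf G M R A A :=
  ⟨0, fun _ => A, rfl, rfl, fun _ _ => hM, fun i hi => absurd hi (by omega)⟩

lemma reconf_trans {M : Multiset ℕ} {R : Finset V → Finset V → Prop} {A B C : Finset V}
    (h1 : Reconf G M R A B) (h2 : Reconf G M R B C) : Reconf G M R A C := by
  obtain ⟨ℓ1, c1, hc10, hc1e, hc1m, hc1s⟩ := h1
  obtain ⟨ℓ2, c2, hc20, hc2e, hc2m, hc2s⟩ := h2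
  refine ⟨ℓ1 + ℓ2, fun i => if i ≤ ℓ1 then c1 i else c2 (i - ℓ1), by simp [hc10], ?_, ?_, ?_⟩
  · by_cases h : ℓ2 = 0
    · subst h; simp [hc1e, ← hc2e, ← hc20]
    · have : ¬ (ℓ1 + ℓ2 ≤ ℓ1) := by omega
      simp [this, hc2e]
  · intro i hi
    by_cases h : i ≤ ℓ1
    · simp only [h, if_pos]; exact hc1m i h
    · simp only [h, if_neg, if_false]
      exact hc2m (i - ℓ1) (by omega)
  · intro i hi
    by_cases h : i + 1 ≤ ℓ1
    · have h' : i ≤ ℓ1 := by omega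
      simp only [h, h', if_pos]
      exact hc1s i (by omega)
    · by_cases h' : i ≤ ℓ1
      · have hieq : i = ℓ1 := by omega
        subst hieq
        have e1 : c1 i = c2 0 := by rw [hc1e, hc20]
        simp only [h, h', if_pos, if_neg, if_false]
        rw [e1]
        have : i + 1 - i = 1 := by omega
        rw [this]
        exact hc2s 0 (by omega)
      · simp only [h, h', if_neg, if_false]
        have : i + 1 - ℓ1 = (i - ℓ1) + 1 := by omega
        rw [this]
        exact hc2s (i - ℓ1) (by omega)

lemma reconf_of_steps {M : Multiset ℕ} {R R' : Finset V → Finset V → Prop} {A B : Finset V}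
    (h : Reconf G M R A B)
    (hstep : ∀ U U', R U U' → ccMultiset G U = M → Reconf G M R' U U') :
    Reconf G M R' A B := by
  obtain ⟨ℓ, Wf, h0, he, hm, hs⟩ := h
  have key : ∀ k, k ≤ ℓ → Reconf G M R' A (Wf k) := by
    intro k
    induction k with
    | zero => intro _; rw [← h0] at *; exact reconf_refl (hm 0 (by omega))
    | succ k ih =>
      intro hk
      exact reconf_trans (ih (by omega))
        (hstep (Wf k) (Wf (k + 1)) (hs k (by omega)) (hm k (by omega)))
  rw [← he]; exact key ℓ le_rfl

/-- decomposition of a CS step into TJ steps -/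
lemma cs_to_tj {M : Multiset ℕ} {U U' : Finset V} (h : adjCS G U U')
    (hM : ccMultiset G U = M) : Reconf G M (adjTJ G) U U' := by
  obtain ⟨⟨hmul, hc1, hc2⟩, hslide⟩ := h
  obtain ⟨C, hC⟩ := Finset.card_eq_one.1 hc1
  obtain ⟨C', hC'⟩ := Finset.card_eq_one.1 hc2
  have hCd : C ∈ comps G U \ comps G U' := by rw [hC]; exact Finset.mem_singleton_self C
  have hC'd : C' ∈ comps G U' \ comps G U := by rw [hC']; exact Finset.mem_singleton_self C'
  have hCU : C ∈ comps G U := (Finset.mem_sdiff.1 hCd).1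
  have hCnU' : C ∉ comps G U' := (Finset.mem_sdiff.1 hCd).2
  have hC'U' : C' ∈ comps G U' := (Finset.mem_sdiff.1 hC'd).1
  have hC'nU : C' ∉ comps G U := (Finset.mem_sdiff.1 hC'd).2
  have hWconn : IsConnSub G (C ∪ C') := hslide C hCd C' hC'd
  have hCconn : IsConnSub G C := (mem_comps_iff.1 hCU).2.1
  have hC'conn : IsConnSub G C' := (mem_comps_iff.1 hC'U').2.1
  have hCsub : C ⊆ U := (mem_comps_iff.1 hCU).1
  have hC'sub : C' ⊆ U' := (mem_comps_iff.1 hC'U').1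
  -- the common part
  have hUC : U \ C = U' \ C' := by
    ext x
    simp only [Finset.mem_sdiff]
    constructor
    · rintro ⟨hxU, hxC⟩
      obtain ⟨D, hD, hxD⟩ := exists_comp_mem hxU
      have hDC : D ≠ C := fun h => hxC (h ▸ hxD)
      have hDU' : D ∈ comps G U' := by
        by_contra hn
        have : D ∈ comps G U \ comps G U' := Finset.mem_sdiff.2 ⟨hD, hn⟩
        rw [hC] at this
        exact hDC (Finset.mem_singleton.1 this)
      have hDC' : D ≠ C' := fun h => hC'nU (h ▸ hD)
      refine ⟨(mem_comps_iff.1 hDU').1 hxD, fun hxC' => ?_⟩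
      exact Finset.disjoint_left.1 (comps_disjoint hDU' hC'U' hDC') hxD hxC'
    · rintro ⟨hxU', hxC'⟩
      obtain ⟨D, hD, hxD⟩ := exists_comp_mem hxU'
      have hDC' : D ≠ C' := fun h => hxC' (h ▸ hxD)
      have hDU : D ∈ comps G U := by
        by_contra hn
        have : D ∈ comps G U' \ comps G U := Finset.mem_sdiff.2 ⟨hD, hn⟩
        rw [hC'] at this
        exact hDC' (Finset.mem_singleton.1 this)
      have hDC : D ≠ C := fun h => hCnU' (h ▸ hD)
      refine ⟨(mem_comps_iff.1 hDU).1 hxD, fun hxC => ?_⟩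
      exact Finset.disjoint_left.1 (comps_disjoint hDU hCU hDC) hxD hxC
  set A := U \ C with hAdef
  have hAU : A ∪ C = U := Finset.sdiff_union_of_subset hCsub
  have hAU' : A ∪ C' = U' := by rw [hUC]; exact Finset.sdiff_union_of_subset hC'sub
  have hnadjC : ∀ x ∈ C, ∀ a ∈ A, ¬ G.Adj x a := by
    intro x hx a ha
    exact comp_not_adj hCU hx (Finset.mem_sdiff.1 ha).1 (Finset.mem_sdiff.1 ha).2
  have hnadjC' : ∀ x ∈ C', ∀ a ∈ A, ¬ G.Adj x a := by
    intro x hx a ha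
    rw [hUC] at ha
    exact comp_not_adj hC'U' hx (Finset.mem_sdiff.1 ha).1 (Finset.mem_sdiff.1 ha).2
  have hdisjC : Disjoint C A := (Finset.sdiff_disjoint).symm
  have hdisjC' : Disjoint C' A := by
    rw [hUC]; exact (Finset.sdiff_disjoint).symm
  have hcompsU : comps G U = insert C (comps G A) := by
    rw [← hAU]; exact comps_union_isolated hCconn hdisjC hnadjC
  have hcompsU' : comps G U' = insert C' (comps G A) := by
    rw [← hAU']; exact comps_union_isolated hC'conn hdisjC' hnadjC'
  have hnotinA : ∀ X : Finset V, X.Nonempty → Disjoint X A → X ∉ comps G A := by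
    intro X hXne hXd hXA
    obtain ⟨x, hx⟩ := hXne
    exact Finset.disjoint_left.1 hXd hx ((mem_comps_iff.1 hXA).1 hx)
  have hCnA : C ∉ comps G A := hnotinA C hCconn.nonempty hdisjC
  have hC'nA : C' ∉ comps G A := hnotinA C' hC'conn.nonempty hdisjC'
  -- cardinalities agree
  have hccU : ccMultiset G U = C.card ::ₘ (comps G A).val.map Finset.card := by
    rw [ccMultiset, hcompsU, Finset.insert_val_of_notMem hCnA, Multiset.map_cons]
  have hccU' : ccMultiset G U' = C'.card ::ₘ (comps G A).val.map Finset.card := by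
    rw [ccMultiset, hcompsU', Finset.insert_val_of_notMem hC'nA, Multiset.map_cons]
  have hcard : C.card = C'.card := by
    apply cons_cancel
    rw [← hccU, ← hccU', hmul]
  -- the chain inside C ∪ C'
  obtain ⟨ℓ, c, hc0, hce, hcm, hcs⟩ := chain_between hWconn hCconn hC'conn
    Finset.subset_union_left Finset.subset_union_right hcard
  -- multiset of intermediate configurations
  have hdisjW : Disjoint (C ∪ C') A := Finset.disjoint_union_left.2 ⟨hdisjC, hdisjC'⟩
  have hmid : ∀ X : Finset V, X ⊆ C ∪ C' → IsConnSub G X → X.card = C.card →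
      ccMultiset G (A ∪ X) = M := by
    intro X hXW hXc hXcard
    have hXd : Disjoint X A := Finset.disjoint_of_subset_left hXW hdisjW
    have hXnadj : ∀ x ∈ X, ∀ a ∈ A, ¬ G.Adj x a := by
      intro x hx a ha
      rcases Finset.mem_union.1 (hXW hx) with h | h
      · exact hnadjC x h a ha
      · exact hnadjC' x h a ha
    have : comps G (A ∪ X) = insert X (comps G A) :=
      comps_union_isolated hXc hXd hXnadj
    rw [← hM, hccU, ccMultiset, this,
      Finset.insert_val_of_notMem (hnotinA X hXc.nonempty hXd), Multiset.map_cons, hXcard]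
  -- sdiff computation
  have hsdiff : ∀ X Y : Finset V, X ⊆ C ∪ C' → (A ∪ X) \ (A ∪ Y) = X \ Y := by
    intro X Y hXW
    have hXd : Disjoint X A := Finset.disjoint_of_subset_left hXW hdisjW
    ext x
    simp only [Finset.mem_sdiff, Finset.mem_union, not_or]
    constructor
    · rintro ⟨hx | hx, hxA, hxY⟩
      · exact absurd hx hxA
      · exact ⟨hx, hxY⟩
    · rintro ⟨hxX, hxY⟩
      exact ⟨Or.inr hxX, Finset.disjoint_left.1 hXd hxX, hxY⟩
  refine ⟨ℓ, fun i => A ∪ c i, by show A ∪ c 0 = U; rw [hc0, hAU], by show A ∪ c ℓ = U'; rw [hce, hAU'], ?_, ?_⟩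
  · intro i hi
    obtain ⟨h1, h2, h3⟩ := hcm i hi
    exact hmid (c i) h1 h2 h3
  · intro i hi
    obtain ⟨hd1, hd2⟩ := hcs i hi
    constructor
    · rw [hsdiff (c i) (c (i + 1)) (hcm i (by omega)).1]; exact hd1
    · rw [hsdiff (c (i + 1)) (c i) (hcm (i + 1) (by omega)).1]; exact hd2


end

/-- Reconfigurability under CS implies reconfigurability under CJ and under TJ. -/
theorem stmt1 {V : Type*} [Fintype V] [DecidableEq V] (G : SimpleGraph V)
    (M : Multiset ℕ) (A B : Finset V)
    (hA : ccMultiset G A = M) (hB : ccMultiset G B = M)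
    (h : Reconf G M (adjCS G) A B) :
    Reconf G M (adjCJ G) A B ∧ Reconf G M (adjTJ G) A B := by
  constructor
  · obtain ⟨ℓ, Wf, h0, he, hm, hs⟩ := h
    exact ⟨ℓ, Wf, h0, he, hm, fun i hi => (hs i hi).1⟩
  · exact reconf_of_steps h (fun U U' hR hU => cs_to_tj hR hU)
end
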